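/- arXiv:2604.14937 — 4 statements merged into one kernel-verified Lean document; each statement's English description precedes it below -/
import Mathlib

section
/- For every t ∈ ℝ, the maps τ_t and σ_t are unital ℂ-algebra automorphisms of 𝒜, one has τ_t ∘ σ_s = σ_s ∘ τ_t for all s, t ∈ ℝ, and the following identities hold as maps 𝒜 → 𝒜 ⊗_ℂ 𝒜: Δ ∘ τ_t = (τ_t⊗τ_t) ∘ Δ = (σ_t⊗σ_{−t}) ∘ Δ and Δ ∘ σ_t = (τ_t⊗σ_t) ∘ Δ = (σ_t⊗τ_{−t}) ∘ Δ. -/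
open scoped TensorProduct

noncomputable section
set_option linter.unusedSectionVars false
set_option linter.unusedVariables false
set_option maxHeartbeats 1000000

/-- The monomial family `α^n γ^m (γ*)^k` (for `n ≥ 0`) resp. `(α*)^{-n} γ^m (γ*)^k`
(for `n < 0`), indexed by `(n, m, k) ∈ ℤ × ℕ × ℕ`. -/
def suqMono {A : Type*} [Ring A] [StarRing A] (a g : A) (i : ℤ × ℕ × ℕ) : A :=
  (if 0 ≤ i.1 then a ^ i.1.toNat else (star a) ^ (-i.1).toNat) * g ^ i.2.1 * (star g) ^ i.2.2

/-- The degree-`p` homogeneous component `𝒜_p`: the `ℂ`-span of the basis monomials with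
`m - k = p`. -/
def suqHomog {A : Type*} [Ring A] [Algebra ℂ A] [StarRing A] (a g : A) (p : ℤ) :
    Submodule ℂ A :=
  Submodule.span ℂ
    {x | ∃ i : ℤ × ℕ × ℕ, (i.2.1 : ℤ) - (i.2.2 : ℤ) = p ∧ x = suqMono a g i}

/-- The defining relations of `Pol(SU_q(2))`. -/
def SUqRel {A : Type*} [Ring A] [Algebra ℂ A] [StarRing A] (q : ℂ) (a g : A) : Prop :=
  star a * a + star g * g = 1 ∧
  a * star a + ((‖q‖ : ℂ) ^ 2) • (star g * g) = 1 ∧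
  g * star g = star g * g ∧
  a * g = (starRingEnd ℂ q) • (g * a) ∧
  a * star g = q • (star g * a)

/-- The monomials form a `ℂ`-basis. -/
def SUqBasis {A : Type*} [Ring A] [Algebra ℂ A] [StarRing A] (a g : A) : Prop :=
  LinearIndependent ℂ (suqMono a g) ∧
  Submodule.span ℂ (Set.range (suqMono a g)) = ⊤

/-- The characterizing properties of the antipode `S`. -/
def SUqAntipode {A : Type*} [Ring A] [Algebra ℂ A] [StarRing A] (q : ℂ) (a g : A)
    (S : A →ₗ[ℂ] A) : Prop :=
  S 1 = 1 ∧ S a = star a ∧ S (star a) = a ∧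
  S g = (-(starRingEnd ℂ q)) • g ∧ S (star g) = (-q⁻¹) • star g ∧
  (∀ p : ℤ, ∀ x ∈ suqHomog a g p, S x ∈ suqHomog a g p) ∧
  (∀ p r : ℤ, ∀ x ∈ suqHomog a g p, ∀ y ∈ suqHomog a g r,
    S (x * y) = ((q / starRingEnd ℂ q) ^ (-(p * r))) • (S y * S x))

/-- The braided multiplication on `𝒜 ⊗ 𝒜`. -/
def SUqBraidedMul {A : Type*} [Ring A] [Algebra ℂ A] [StarRing A] (q : ℂ) (a g : A)
    (μ : A ⊗[ℂ] A →ₗ[ℂ] A ⊗[ℂ] A →ₗ[ℂ] A ⊗[ℂ] A) : Prop :=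
  ∀ (x w : A) (r s : ℤ), ∀ y ∈ suqHomog a g r, ∀ z ∈ suqHomog a g s,
    μ (x ⊗ₜ[ℂ] y) (z ⊗ₜ[ℂ] w)
      = ((q / starRingEnd ℂ q) ^ (-(r * s))) • ((x * z) ⊗ₜ[ℂ] (y * w))

/-- The characterizing properties of the comultiplication `Δ` (as a unital algebra
homomorphism into the braided tensor square with multiplication `μ`). -/
def SUqComul {A : Type*} [Ring A] [Algebra ℂ A] [StarRing A] (q : ℂ) (a g : A)
    (μ : A ⊗[ℂ] A →ₗ[ℂ] A ⊗[ℂ] A →ₗ[ℂ] A ⊗[ℂ] A) (Δ : A →ₗ[ℂ] A ⊗[ℂ] A) : Prop :=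
  Δ 1 = 1 ⊗ₜ[ℂ] 1 ∧ (∀ x y : A, Δ (x * y) = μ (Δ x) (Δ y)) ∧
  Δ a = a ⊗ₜ[ℂ] a - q • ((star g) ⊗ₜ[ℂ] g) ∧
  Δ g = g ⊗ₜ[ℂ] a + (star a) ⊗ₜ[ℂ] g ∧
  Δ (star a) = (star a) ⊗ₜ[ℂ] (star a) - q • (g ⊗ₜ[ℂ] (star g)) ∧
  Δ (star g) = (star g) ⊗ₜ[ℂ] (star a) + a ⊗ₜ[ℂ] (star g)

/-- The braided flip `c` on `𝒜 ⊗ 𝒜`. -/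
def SUqFlip {A : Type*} [Ring A] [Algebra ℂ A] [StarRing A] (q : ℂ) (a g : A)
    (c : A ⊗[ℂ] A →ₗ[ℂ] A ⊗[ℂ] A) : Prop :=
  ∀ (p r : ℤ), ∀ x ∈ suqHomog a g p, ∀ y ∈ suqHomog a g r,
    c (x ⊗ₜ[ℂ] y) = ((q / starRingEnd ℂ q) ^ (-(p * r))) • (y ⊗ₜ[ℂ] x)

/-- The Haar functional, defined on the basis. -/
def SUqHaar {A : Type*} [Ring A] [Algebra ℂ A] [StarRing A] (q : ℂ) (a g : A)
    (h : A →ₗ[ℂ] ℂ) : Prop :=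
  ∀ i : ℤ × ℕ × ℕ, h (suqMono a g i) =
    if i.1 = 0 ∧ i.2.1 = i.2.2
    then (1 - (‖q‖ : ℂ) ^ 2) / (1 - (‖q‖ : ℂ) ^ (2 * (i.2.1 + 1)))
    else 0

/-- The scaling group: `τ_t(a) = |q|^{2itp}·a` for `a ∈ 𝒜_p`,
where `|q|^{2it} = exp(2it·log|q|)`. -/
def SUqScaling {A : Type*} [Ring A] [Algebra ℂ A] [StarRing A] (q : ℂ) (a g : A)
    (τ : ℝ → (A →ₗ[ℂ] A)) : Prop :=
  ∀ (t : ℝ) (p : ℤ), ∀ x ∈ suqHomog a g p,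
    τ t x = Complex.exp (2 * Complex.I * (t : ℂ) *
      ((Real.log (‖q‖) : ℝ) : ℂ) * (p : ℂ)) • x

/-- The modular group, defined on the basis: `σ_t(αⁿγᵐ(γ*)ᵏ) = |q|^{-2itn}·αⁿγᵐ(γ*)ᵏ` and
`σ_t((α*)ⁿγᵐ(γ*)ᵏ) = |q|^{2itn}·(α*)ⁿγᵐ(γ*)ᵏ`. -/
def SUqModular {A : Type*} [Ring A] [Algebra ℂ A] [StarRing A] (q : ℂ) (a g : A)
    (σ : ℝ → (A →ₗ[ℂ] A)) : Prop :=
  ∀ (t : ℝ) (i : ℤ × ℕ × ℕ),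
    σ t (suqMono a g i) = Complex.exp (-(2 * Complex.I * (t : ℂ) *
      ((Real.log (‖q‖) : ℝ) : ℂ) * (i.1 : ℂ))) • suqMono a g i

namespace SUqAux

variable {A : Type*} [Ring A] [Algebra ℂ A] [StarRing A] [StarModule ℂ A]

def Apow (a : A) (n : ℤ) : A := if 0 ≤ n then a ^ n.toNat else (star a) ^ (-n).toNat

lemma suqMono_def (a g : A) (i : ℤ × ℕ × ℕ) :
    suqMono a g i = Apow a i.1 * g ^ i.2.1 * (star g) ^ i.2.2 := rfl

def W (a g : A) (d : ℤ × ℤ) : Submodule ℂ A :=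
  Submodule.span ℂ {x | ∃ i : ℤ × ℕ × ℕ,
    i.1 = d.1 ∧ (i.2.1 : ℤ) - (i.2.2 : ℤ) = d.2 ∧ x = suqMono a g i}

lemma mono_mem (a g : A) (i : ℤ × ℕ × ℕ) :
    suqMono a g i ∈ W a g (i.1, (i.2.1 : ℤ) - i.2.2) :=
  Submodule.subset_span ⟨i, rfl, rfl, rfl⟩

lemma mono_mem' (a g : A) (i : ℤ × ℕ × ℕ) (d : ℤ × ℤ) (h1 : i.1 = d.1)
    (h2 : (i.2.1 : ℤ) - i.2.2 = d.2) : suqMono a g i ∈ W a g d :=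
  Submodule.subset_span ⟨i, h1, h2, rfl⟩

lemma W_le_homog (a g : A) (n p : ℤ) : W a g (n, p) ≤ suqHomog a g p :=
  Submodule.span_mono (fun x ⟨i, _, h2, h3⟩ => ⟨i, h2, h3⟩)

lemma pow_mul_comm {x c : A} {s : ℂ} (h : x * c = s • (c * x)) :
    ∀ m : ℕ, x ^ m * c = s ^ m • (c * x ^ m) := by
  intro m
  induction m with
  | zero => simp
  | succ m ih =>
    calc x ^ (m+1) * c = x ^ m * (x * c) := by rw [pow_succ, mul_assoc]
      _ = x ^ m * (s • (c * x)) := by rw [h]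
      _ = s • ((x ^ m * c) * x) := by rw [mul_smul_comm, mul_assoc]
      _ = s • ((s ^ m • (c * x ^ m)) * x) := by rw [ih]
      _ = (s ^ m * s) • (c * x ^ (m+1)) := by
            rw [smul_mul_assoc, smul_smul, mul_assoc, ← pow_succ x m, mul_comm s (s ^ m)]
      _ = s ^ (m+1) • (c * x ^ (m+1)) := by rw [pow_succ s m]

section Rel

variable {q : ℂ} {a g : A}

lemma hq' (hq : q ≠ 0) : (starRingEnd ℂ) q ≠ 0 := by
  simpa using hq

lemma rel_ga (hq : q ≠ 0) (hrel : SUqRel q a g) : g * a = ((starRingEnd ℂ) q)⁻¹ • (a * g) := by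
  rw [hrel.2.2.2.1, smul_smul, inv_mul_cancel₀ (hq' hq), one_smul]

lemma rel_Ga (hq : q ≠ 0) (hrel : SUqRel q a g) : star g * a = q⁻¹ • (a * star g) := by
  rw [hrel.2.2.2.2, smul_smul, inv_mul_cancel₀ hq, one_smul]

lemma rel_gA (hrel : SUqRel q a g) : g * star a = ((starRingEnd ℂ) q) • (star a * g) := by
  have h := congrArg star hrel.2.2.2.2
  rw [star_mul, star_star, star_smul, star_mul, star_star] at h
  rw [starRingEnd_apply]
  exact h

lemma rel_GA (hrel : SUqRel q a g) : star g * star a = q • (star a * star g) := by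
  have h := congrArg star hrel.2.2.2.1
  rw [star_mul, star_smul, star_mul, starRingEnd_apply, star_star] at h
  exact h

lemma rel_comm (hrel : SUqRel q a g) : Commute g (star g) := hrel.2.2.1

lemma Apow_mul_a (hrel : SUqRel q a g) (n : ℤ) : ∃ c : ℂ,
    Apow a n * a = Apow a (n + 1) + c • (Apow a (n + 1) * (star g * g)) := by
  by_cases hn : 0 ≤ n
  · refine ⟨0, ?_⟩
    have ht : (n + 1).toNat = n.toNat + 1 := by omega
    simp only [Apow, if_pos hn, if_pos (by omega : (0:ℤ) ≤ n + 1), ht, pow_succ,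
      zero_smul, add_zero]
  · refine ⟨-1, ?_⟩
    obtain ⟨j, hjj⟩ : ∃ j, (-n).toNat = j + 1 := ⟨(-n).toNat - 1, by omega⟩
    have hsa : star a * a = 1 - star g * g := eq_sub_of_add_eq hrel.1
    have hA0 : Apow a n = (star a) ^ (j + 1) := by
      simp only [Apow, if_neg hn, hjj]
    have hA1 : Apow a (n + 1) = (star a) ^ j := by
      by_cases h0 : 0 ≤ n + 1
      · have hn1 : n = -1 := by omega
        subst hn1
        have : j = 0 := by omega
        subst this
        simp [Apow]
      · simp only [Apow, if_neg h0]
        congr 1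
        omega
    rw [hA0, hA1, pow_succ, mul_assoc, hsa, mul_sub, mul_one, neg_smul, one_smul,
      sub_eq_add_neg]

lemma Apow_mul_sa (hrel : SUqRel q a g) (n : ℤ) : ∃ c : ℂ,
    Apow a n * star a = Apow a (n - 1) + c • (Apow a (n - 1) * (star g * g)) := by
  by_cases hn : 0 < n
  · refine ⟨-((‖q‖ : ℂ) ^ 2), ?_⟩
    obtain ⟨j, hjj⟩ : ∃ j, n.toNat = j + 1 := ⟨n.toNat - 1, by omega⟩
    have haa : a * star a = 1 - ((‖q‖ : ℂ) ^ 2) • (star g * g) :=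
      eq_sub_of_add_eq hrel.2.1
    have hA0 : Apow a n = a ^ (j + 1) := by
      simp only [Apow, if_pos (le_of_lt hn), hjj]
    have hA1 : Apow a (n - 1) = a ^ j := by
      have h0 : 0 ≤ n - 1 := by omega
      have : (n - 1).toNat = j := by omega
      simp only [Apow, if_pos h0, this]
    rw [hA0, hA1, pow_succ, mul_assoc, haa, mul_sub, mul_one, mul_smul_comm, neg_smul,
      sub_eq_add_neg]
  · refine ⟨0, ?_⟩
    have hA0 : Apow a n = (star a) ^ (-n).toNat := by
      by_cases h0 : 0 ≤ n
      · have : n = 0 := by omega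
        subst this
        simp [Apow]
      · simp only [Apow, if_neg h0]
    have hA1 : Apow a (n - 1) = (star a) ^ ((-n).toNat + 1) := by
      have h0 : ¬ (0 ≤ n - 1) := by omega
      have ht : (-(n - 1)).toNat = (-n).toNat + 1 := by omega
      simp only [Apow, if_neg h0, ht]
    rw [hA0, hA1, pow_succ, zero_smul, add_zero]

lemma helper_Gg {g : A} (hcm : Commute g (star g)) (x : A) (m k : ℕ) :
    x * (star g * g) * g ^ m * (star g) ^ k = x * g ^ (m + 1) * (star g) ^ (k + 1) := by
  have hc : star g * g ^ (m + 1) = g ^ (m + 1) * star g :=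
    (hcm.symm.pow_right (m + 1)).eq
  calc x * (star g * g) * g ^ m * (star g) ^ k
      = x * (star g * (g * g ^ m)) * (star g) ^ k := by
        rw [mul_assoc x, mul_assoc (star g)]
    _ = x * (star g * g ^ (m + 1)) * (star g) ^ k := by rw [← pow_succ']
    _ = x * (g ^ (m + 1) * star g) * (star g) ^ k := by rw [hc]
    _ = x * g ^ (m + 1) * (star g * (star g) ^ k) := by
        rw [mul_assoc, mul_assoc, mul_assoc]
    _ = x * g ^ (m + 1) * (star g) ^ (k + 1) := by rw [← pow_succ']

lemma mono_mul_g {a g : A} (hcm : Commute g (star g)) (i : ℤ × ℕ × ℕ) :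
    suqMono a g i * g = suqMono a g (i.1, i.2.1 + 1, i.2.2) := by
  obtain ⟨n, m, k⟩ := i
  have hc : (star g) ^ k * g = g * (star g) ^ k := (hcm.symm.pow_left k).eq
  show Apow a n * g ^ m * (star g) ^ k * g = Apow a n * g ^ (m + 1) * (star g) ^ k
  calc Apow a n * g ^ m * (star g) ^ k * g
      = Apow a n * g ^ m * ((star g) ^ k * g) := by rw [mul_assoc]
    _ = Apow a n * g ^ m * (g * (star g) ^ k) := by rw [hc]
    _ = Apow a n * (g ^ m * g) * (star g) ^ k := by
        rw [← mul_assoc (Apow a n * g ^ m) g ((star g) ^ k), mul_assoc (Apow a n) (g ^ m) g]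
    _ = Apow a n * g ^ (m + 1) * (star g) ^ k := by rw [pow_succ]

lemma mono_mul_G {a g : A} (i : ℤ × ℕ × ℕ) :
    suqMono a g i * star g = suqMono a g (i.1, i.2.1, i.2.2 + 1) := by
  obtain ⟨n, m, k⟩ := i
  show Apow a n * g ^ m * (star g) ^ k * star g = Apow a n * g ^ m * (star g) ^ (k + 1)
  rw [mul_assoc, ← pow_succ]

lemma mono_mul_gen_mem {a g : A} (hcm : Commute g (star g)) (C : A) (sg sG : ℂ) (δ : ℤ)
    (hgC : g * C = sg • (C * g)) (hGC : star g * C = sG • (C * star g))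
    (hAC : ∀ n : ℤ, ∃ c : ℂ, Apow a n * C
      = Apow a (n + δ) + c • (Apow a (n + δ) * (star g * g))) (i : ℤ × ℕ × ℕ) :
    suqMono a g i * C ∈ W a g (i.1 + δ, (i.2.1 : ℤ) - i.2.2) := by
  obtain ⟨n, m, k⟩ := i
  obtain ⟨c, hA⟩ := hAC n
  have key : suqMono a g (n, m, k) * C
      = (sg ^ m * sG ^ k) •
        (suqMono a g (n + δ, m, k) + c • suqMono a g (n + δ, m + 1, k + 1)) := by
    calc suqMono a g (n, m, k) * C
        = Apow a n * g ^ m * (star g) ^ k * C := rfl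
      _ = Apow a n * g ^ m * ((star g) ^ k * C) := by rw [mul_assoc]
      _ = Apow a n * g ^ m * (sG ^ k • (C * (star g) ^ k)) := by rw [pow_mul_comm hGC k]
      _ = sG ^ k • (Apow a n * g ^ m * (C * (star g) ^ k)) := by rw [mul_smul_comm]
      _ = sG ^ k • (Apow a n * (g ^ m * C) * (star g) ^ k) := by
          rw [← mul_assoc (Apow a n * g ^ m) C ((star g) ^ k), mul_assoc (Apow a n) (g ^ m) C]
      _ = sG ^ k • (Apow a n * (sg ^ m • (C * g ^ m)) * (star g) ^ k) := by
          rw [pow_mul_comm hgC m]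
      _ = sG ^ k • (sg ^ m • (Apow a n * (C * g ^ m) * (star g) ^ k)) := by
          rw [mul_smul_comm, smul_mul_assoc]
      _ = (sg ^ m * sG ^ k) • (Apow a n * C * g ^ m * (star g) ^ k) := by
          rw [smul_smul, mul_comm (sG ^ k) (sg ^ m), ← mul_assoc (Apow a n) C (g ^ m)]
      _ = (sg ^ m * sG ^ k) •
          ((Apow a (n + δ) + c • (Apow a (n + δ) * (star g * g))) * g ^ m * (star g) ^ k) := by
          rw [hA]
      _ = (sg ^ m * sG ^ k) • (Apow a (n + δ) * g ^ m * (star g) ^ k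
            + c • (Apow a (n + δ) * (star g * g) * g ^ m * (star g) ^ k)) := by
          rw [add_mul, add_mul, smul_mul_assoc, smul_mul_assoc]
      _ = (sg ^ m * sG ^ k) • (Apow a (n + δ) * g ^ m * (star g) ^ k
            + c • (Apow a (n + δ) * g ^ (m + 1) * (star g) ^ (k + 1))) := by
          rw [helper_Gg hcm (Apow a (n + δ)) m k]
      _ = (sg ^ m * sG ^ k) •
          (suqMono a g (n + δ, m, k) + c • suqMono a g (n + δ, m + 1, k + 1)) := rfl
  rw [key]
  refine Submodule.smul_mem _ _ (add_mem (mono_mem' a g _ _ rfl rfl) ?_)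
  refine Submodule.smul_mem _ _ (mono_mem' a g (n + δ, m + 1, k + 1) _ rfl ?_)
  push_cast
  ring

end Rel

lemma W_le_homog2 (a g : A) (d : ℤ × ℤ) : W a g d ≤ suqHomog a g d.2 :=
  Submodule.span_mono (fun x ⟨i, _, h2, h3⟩ => ⟨i, h2, h3⟩)

lemma W_induction {a g : A} {d : ℤ × ℤ} {p : A → Prop}
    (mem : ∀ i : ℤ × ℕ × ℕ, i.1 = d.1 → (i.2.1 : ℤ) - i.2.2 = d.2 → p (suqMono a g i))
    (zero : p 0) (add : ∀ x y, p x → p y → p (x + y))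
    (smul : ∀ (c : ℂ) (x), p x → p (c • x)) :
    ∀ x ∈ W a g d, p x := by
  intro x hx
  refine Submodule.span_induction (p := fun y _ => p y) (fun y hy => ?_) zero
    (fun u v _ _ hu hv => add u v hu hv) (fun c u _ hu => smul c u hu) hx
  obtain ⟨i, h1, h2, rfl⟩ := hy
  exact mem i h1 h2

lemma W_mul_gen {q : ℂ} {a g : A} (hq : q ≠ 0) (hrel : SUqRel q a g) (d : ℤ × ℤ) {x : A}
    (hx : x ∈ W a g d) :
    x * a ∈ W a g (d.1 + 1, d.2) ∧ x * star a ∈ W a g (d.1 - 1, d.2) ∧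
    x * g ∈ W a g (d.1, d.2 + 1) ∧ x * star g ∈ W a g (d.1, d.2 - 1) := by
  have hcm : Commute g (star g) := rel_comm hrel
  refine W_induction (p := fun y => y * a ∈ W a g (d.1 + 1, d.2) ∧
    y * star a ∈ W a g (d.1 - 1, d.2) ∧
    y * g ∈ W a g (d.1, d.2 + 1) ∧ y * star g ∈ W a g (d.1, d.2 - 1)) ?_ ?_ ?_ ?_ x hx
  · intro i h1 h2
    refine ⟨?_, ?_, ?_, ?_⟩
    · have := mono_mul_gen_mem hcm a ((starRingEnd ℂ) q)⁻¹ q⁻¹ 1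
        (rel_ga hq hrel) (rel_Ga hq hrel) (fun n => Apow_mul_a hrel n) i
      rwa [h1, h2] at this
    · have hAC : ∀ n : ℤ, ∃ c : ℂ, Apow a n * star a
          = Apow a (n + (-1)) + c • (Apow a (n + (-1)) * (star g * g)) := by
        intro n
        obtain ⟨c, hc⟩ := Apow_mul_sa hrel n
        exact ⟨c, by rwa [show n + (-1 : ℤ) = n - 1 by ring]⟩
      have := mono_mul_gen_mem hcm (star a) ((starRingEnd ℂ) q) q (-1)
        (rel_gA hrel) (rel_GA hrel) hAC i
      rwa [h1, h2, show d.1 + (-1 : ℤ) = d.1 - 1 by ring] at this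
    · rw [mono_mul_g hcm]
      exact mono_mem' a g _ _ h1 (by push_cast; omega)
    · rw [mono_mul_G]
      exact mono_mem' a g _ _ h1 (by push_cast; omega)
  · refine ⟨?_, ?_, ?_, ?_⟩ <;> rw [zero_mul] <;> exact zero_mem _
  · intro u v hu hv
    refine ⟨?_, ?_, ?_, ?_⟩ <;> rw [add_mul]
    exacts [add_mem hu.1 hv.1, add_mem hu.2.1 hv.2.1, add_mem hu.2.2.1 hv.2.2.1,
      add_mem hu.2.2.2 hv.2.2.2]
  · intro c u hu
    refine ⟨?_, ?_, ?_, ?_⟩ <;> rw [smul_mul_assoc]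
    exacts [Submodule.smul_mem _ _ hu.1, Submodule.smul_mem _ _ hu.2.1,
      Submodule.smul_mem _ _ hu.2.2.1, Submodule.smul_mem _ _ hu.2.2.2]

lemma W_mul_mono {q : ℂ} {a g : A} (hq : q ≠ 0) (hrel : SUqRel q a g) (d : ℤ × ℤ) {x : A}
    (hx : x ∈ W a g d) (i : ℤ × ℕ × ℕ) :
    x * suqMono a g i ∈ W a g (d.1 + i.1, d.2 + i.2.1 - i.2.2) := by
  obtain ⟨n, m, k⟩ := i
  have hpa : ∀ j : ℕ, x * a ^ j ∈ W a g (d.1 + j, d.2) := by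
    intro j
    induction j with
    | zero => simpa using hx
    | succ j ih =>
      have e1 : d.1 + ((j + 1 : ℕ) : ℤ) = (d.1 + j) + 1 := by push_cast; ring
      rw [e1, pow_succ, ← mul_assoc]
      exact (W_mul_gen hq hrel _ ih).1
  have hpA : ∀ j : ℕ, x * (star a) ^ j ∈ W a g (d.1 - j, d.2) := by
    intro j
    induction j with
    | zero => simpa using hx
    | succ j ih =>
      have e1 : d.1 - ((j + 1 : ℕ) : ℤ) = (d.1 - j) - 1 := by push_cast; ring
      rw [e1, pow_succ, ← mul_assoc]
      exact (W_mul_gen hq hrel _ ih).2.1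
  have hx1 : x * Apow a n ∈ W a g (d.1 + n, d.2) := by
    by_cases hn : 0 ≤ n
    · have h := hpa n.toNat
      rw [Int.toNat_of_nonneg hn] at h
      simpa [Apow, if_pos hn] using h
    · have h := hpA (-n).toNat
      rw [Int.toNat_of_nonneg (by omega : (0 : ℤ) ≤ -n),
        show d.1 - -n = d.1 + n by ring] at h
      simpa [Apow, if_neg hn] using h
  have hpg : ∀ (y : A) (e : ℤ × ℤ), y ∈ W a g e → ∀ j : ℕ,
      y * g ^ j ∈ W a g (e.1, e.2 + j) := by
    intro y e hy j
    induction j with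
    | zero => simpa using hy
    | succ j ih =>
      have e1 : e.2 + ((j + 1 : ℕ) : ℤ) = (e.2 + j) + 1 := by push_cast; ring
      rw [e1, pow_succ, ← mul_assoc]
      exact (W_mul_gen hq hrel _ ih).2.2.1
  have hpG : ∀ (y : A) (e : ℤ × ℤ), y ∈ W a g e → ∀ j : ℕ,
      y * (star g) ^ j ∈ W a g (e.1, e.2 - j) := by
    intro y e hy j
    induction j with
    | zero => simpa using hy
    | succ j ih =>
      have e1 : e.2 - ((j + 1 : ℕ) : ℤ) = (e.2 - j) - 1 := by push_cast; ring
      rw [e1, pow_succ, ← mul_assoc]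
      exact (W_mul_gen hq hrel _ ih).2.2.2
  have hsplit : x * suqMono a g (n, m, k) = ((x * Apow a n) * g ^ m) * (star g) ^ k := by
    rw [suqMono_def]
    rw [← mul_assoc x (Apow a n * g ^ m) ((star g) ^ k), ← mul_assoc x (Apow a n) (g ^ m)]
  rw [hsplit]
  exact hpG _ _ (hpg _ _ hx1 m) k

lemma W_mul2 {q : ℂ} {a g : A} (hq : q ≠ 0) (hrel : SUqRel q a g) (d e : ℤ × ℤ) {x y : A}
    (hx : x ∈ W a g d) (hy : y ∈ W a g e) : x * y ∈ W a g (d.1 + e.1, d.2 + e.2) := by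
  refine W_induction (p := fun z => x * z ∈ W a g (d.1 + e.1, d.2 + e.2)) ?_ ?_ ?_ ?_ y hy
  · intro i h1 h2
    have h := W_mul_mono hq hrel d hx i
    rw [h1, show d.2 + (i.2.1 : ℤ) - i.2.2 = d.2 + e.2 by omega] at h
    exact h
  · show x * (0 : A) ∈ W a g (d.1 + e.1, d.2 + e.2)
    rw [mul_zero]; exact zero_mem _
  · intro u v hu hv
    show x * (u + v) ∈ W a g (d.1 + e.1, d.2 + e.2)
    rw [mul_add]; exact add_mem hu hv
  · intro c u hu
    show x * (c • u) ∈ W a g (d.1 + e.1, d.2 + e.2)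
    rw [mul_smul_comm]; exact Submodule.smul_mem _ _ hu

def Efun (q : ℂ) (t : ℝ) : ℂ :=
  Complex.exp (2 * Complex.I * (t : ℂ) * ((Real.log (‖q‖) : ℝ) : ℂ))

lemma Efun_ne (q : ℂ) (t : ℝ) : Efun q t ≠ 0 := Complex.exp_ne_zero _

lemma Efun_zpow (q : ℂ) (t : ℝ) (p : ℤ) :
    Complex.exp (2 * Complex.I * (t : ℂ) * ((Real.log (‖q‖) : ℝ) : ℂ) * (p : ℂ))
      = Efun q t ^ p := by
  rw [mul_comm (2 * Complex.I * (t : ℂ) * ((Real.log (‖q‖) : ℝ) : ℂ)) (p : ℂ),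
    Complex.exp_int_mul]
  rfl

lemma Efun_zpow_neg (q : ℂ) (t : ℝ) (n : ℤ) :
    Complex.exp (-(2 * Complex.I * (t : ℂ) * ((Real.log (‖q‖) : ℝ) : ℂ) * (n : ℂ)))
      = Efun q t ^ (-n) := by
  have h : -(2 * Complex.I * (t : ℂ) * ((Real.log (‖q‖) : ℝ) : ℂ) * (n : ℂ))
      = ((-n : ℤ) : ℂ) * (2 * Complex.I * (t : ℂ) * ((Real.log (‖q‖) : ℝ) : ℂ)) := by
    push_cast
    ring
  rw [h, Complex.exp_int_mul]
  rfl

lemma Efun_neg (q : ℂ) (t : ℝ) : Efun q (-t) = (Efun q t)⁻¹ := by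
  unfold Efun
  rw [← Complex.exp_neg]
  congr 1
  push_cast
  ring


lemma tau_on_W {q : ℂ} {a g : A} {τ : ℝ → (A →ₗ[ℂ] A)} (hτ : SUqScaling q a g τ)
    (t : ℝ) (n p : ℤ) {x : A} (hx : x ∈ W a g (n, p)) : τ t x = Efun q t ^ p • x := by
  have h := hτ t p x (W_le_homog2 a g (n, p) hx)
  rwa [Efun_zpow] at h

lemma sigma_on_W {q : ℂ} {a g : A} {σ : ℝ → (A →ₗ[ℂ] A)} (hσ : SUqModular q a g σ)
    (t : ℝ) (n p : ℤ) {x : A} (hx : x ∈ W a g (n, p)) : σ t x = Efun q t ^ (-n) • x := by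
  refine W_induction (p := fun y => σ t y = Efun q t ^ (-n) • y) ?_ ?_ ?_ ?_ x hx
  · intro i h1 h2
    have h := hσ t i
    rw [h1, Efun_zpow_neg] at h
    exact h
  · simp
  · intro u v hu hv
    rw [map_add, hu, hv, smul_add]
  · intro c u hu
    rw [map_smul, hu, smul_comm]

def DD (a g : A) (d : ℤ × ℤ) : Submodule ℂ (A ⊗[ℂ] A) :=
  Submodule.span ℂ {z | ∃ (d1 d2 : ℤ × ℤ) (u v : A), u ∈ W a g d1 ∧ v ∈ W a g d2 ∧
    d1.2 - d1.1 = d.2 - d.1 ∧ d2.2 + d2.1 = d.2 + d.1 ∧ d1.2 + d2.2 = d.2 ∧ z = u ⊗ₜ[ℂ] v}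

lemma tmul_mem_DD {a g : A} {u v : A} (a1 b1 a2 b2 n p : ℤ)
    (hu : u ∈ W a g (a1, b1)) (hv : v ∈ W a g (a2, b2))
    (c1 : b1 - a1 = p - n) (c2 : b2 + a2 = p + n) (c3 : b1 + b2 = p) :
    u ⊗ₜ[ℂ] v ∈ DD a g (n, p) :=
  Submodule.subset_span ⟨(a1, b1), (a2, b2), u, v, hu, hv, c1, c2, c3, rfl⟩

lemma DD_induction {a g : A} {d : ℤ × ℤ} {p : A ⊗[ℂ] A → Prop}
    (mem : ∀ (d1 d2 : ℤ × ℤ) (u v : A), u ∈ W a g d1 → v ∈ W a g d2 →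
      d1.2 - d1.1 = d.2 - d.1 → d2.2 + d2.1 = d.2 + d.1 → d1.2 + d2.2 = d.2 →
      p (u ⊗ₜ[ℂ] v))
    (zero : p 0) (add : ∀ x y, p x → p y → p (x + y))
    (smul : ∀ (c : ℂ) (x), p x → p (c • x)) :
    ∀ z ∈ DD a g d, p z := by
  intro z hz
  refine Submodule.span_induction (p := fun y _ => p y) (fun y hy => ?_) zero
    (fun u v _ _ hu hv => add u v hu hv) (fun c u _ hu => smul c u hu) hz
  obtain ⟨d1, d2, u, v, hu, hv, c1, c2, c3, rfl⟩ := hy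
  exact mem d1 d2 u v hu hv c1 c2 c3

lemma mu_DD {q : ℂ} {a g : A} {μ : A ⊗[ℂ] A →ₗ[ℂ] A ⊗[ℂ] A →ₗ[ℂ] A ⊗[ℂ] A}
    (hq : q ≠ 0) (hrel : SUqRel q a g) (hμ : SUqBraidedMul q a g μ) (d e : ℤ × ℤ)
    {z w : A ⊗[ℂ] A} (hz : z ∈ DD a g d) (hw : w ∈ DD a g e) :
    μ z w ∈ DD a g (d.1 + e.1, d.2 + e.2) := by
  refine DD_induction (p := fun z' => μ z' w ∈ DD a g (d.1 + e.1, d.2 + e.2))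
    ?_ ?_ ?_ ?_ z hz
  · intro d1 d2 u v hu hv c1 c2 c3
    refine DD_induction
      (p := fun w' => μ (u ⊗ₜ[ℂ] v) w' ∈ DD a g (d.1 + e.1, d.2 + e.2)) ?_ ?_ ?_ ?_ w hw
    · intro e1 e2 u' v' hu' hv' c1' c2' c3'
      have h := hμ u v' d2.2 e1.2 v (W_le_homog2 a g d2 hv) u' (W_le_homog2 a g e1 hu')
      rw [h]
      refine Submodule.smul_mem _ _ (tmul_mem_DD (d1.1 + e1.1) (d1.2 + e1.2)
        (d2.1 + e2.1) (d2.2 + e2.2) (d.1 + e.1) (d.2 + e.2)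
        (W_mul2 hq hrel d1 e1 hu hu') (W_mul2 hq hrel d2 e2 hv hv') ?_ ?_ ?_) <;> omega
    · show μ (u ⊗ₜ[ℂ] v) 0 ∈ DD a g (d.1 + e.1, d.2 + e.2)
      rw [map_zero]
      exact zero_mem _
    · intro x y hx hy
      show μ (u ⊗ₜ[ℂ] v) (x + y) ∈ DD a g (d.1 + e.1, d.2 + e.2)
      rw [map_add]
      exact add_mem hx hy
    · intro c x hx
      show μ (u ⊗ₜ[ℂ] v) (c • x) ∈ DD a g (d.1 + e.1, d.2 + e.2)
      rw [map_smul]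
      exact Submodule.smul_mem _ _ hx
  · show μ 0 w ∈ DD a g (d.1 + e.1, d.2 + e.2)
    rw [map_zero, LinearMap.zero_apply]
    exact zero_mem _
  · intro x y hx hy
    show μ (x + y) w ∈ DD a g (d.1 + e.1, d.2 + e.2)
    rw [map_add, LinearMap.add_apply]
    exact add_mem hx hy
  · intro c x hx
    show μ (c • x) w ∈ DD a g (d.1 + e.1, d.2 + e.2)
    rw [map_smul, LinearMap.smul_apply]
    exact Submodule.smul_mem _ _ hx

lemma mu_DD' {q : ℂ} {a g : A} {μ : A ⊗[ℂ] A →ₗ[ℂ] A ⊗[ℂ] A →ₗ[ℂ] A ⊗[ℂ] A}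
    (hq : q ≠ 0) (hrel : SUqRel q a g) (hμ : SUqBraidedMul q a g μ)
    (n1 p1 n2 p2 n p : ℤ) {z w : A ⊗[ℂ] A} (hn : n = n1 + n2) (hp : p = p1 + p2)
    (hz : z ∈ DD a g (n1, p1)) (hw : w ∈ DD a g (n2, p2)) : μ z w ∈ DD a g (n, p) := by
  subst hn
  subst hp
  exact mu_DD hq hrel hμ (n1, p1) (n2, p2) hz hw

lemma mem_W_a {a g : A} : a ∈ W a g (1, 0) := by
  have h : suqMono a g (1, 0, 0) = a := by norm_num [suqMono]
  have h2 := mono_mem' a g (1, 0, 0) (1, 0) rfl (by norm_num)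
  rwa [h] at h2

lemma mem_W_sa {a g : A} : star a ∈ W a g (-1, 0) := by
  have h : suqMono a g (-1, 0, 0) = star a := by norm_num [suqMono]
  have h2 := mono_mem' a g (-1, 0, 0) (-1, 0) rfl (by norm_num)
  rwa [h] at h2

lemma mem_W_g {a g : A} : g ∈ W a g (0, 1) := by
  have h : suqMono a g (0, 1, 0) = g := by norm_num [suqMono]
  have h2 := mono_mem' a g (0, 1, 0) (0, 1) rfl (by norm_num)
  rwa [h] at h2

lemma mem_W_G {a g : A} : star g ∈ W a g (0, -1) := by
  have h : suqMono a g (0, 0, 1) = star g := by norm_num [suqMono]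
  have h2 := mono_mem' a g (0, 0, 1) (0, -1) rfl (by norm_num)
  rwa [h] at h2

lemma mem_W_one {a g : A} : (1 : A) ∈ W a g (0, 0) := by
  have h : suqMono a g (0, 0, 0) = 1 := by norm_num [suqMono]
  have h2 := mono_mem' a g (0, 0, 0) (0, 0) rfl (by norm_num)
  rwa [h] at h2

lemma Delta_mono_mem {q : ℂ} {a g : A} {μ : A ⊗[ℂ] A →ₗ[ℂ] A ⊗[ℂ] A →ₗ[ℂ] A ⊗[ℂ] A}
    {Δ : A →ₗ[ℂ] A ⊗[ℂ] A} (hq : q ≠ 0) (hrel : SUqRel q a g)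
    (hμ : SUqBraidedMul q a g μ) (hΔ : SUqComul q a g μ Δ) (i : ℤ × ℕ × ℕ) :
    Δ (suqMono a g i) ∈ DD a g (i.1, (i.2.1 : ℤ) - i.2.2) := by
  obtain ⟨hone, hmul, hda, hdg, hdsa, hdsg⟩ := hΔ
  have hD1 : Δ 1 ∈ DD a g (0, 0) := by
    rw [hone]
    exact tmul_mem_DD 0 0 0 0 0 0 mem_W_one mem_W_one (by norm_num) (by norm_num)
      (by norm_num)
  have hDa : Δ a ∈ DD a g (1, 0) := by
    rw [hda]
    exact sub_mem
      (tmul_mem_DD 1 0 1 0 1 0 mem_W_a mem_W_a (by norm_num) (by norm_num) (by norm_num))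
      (Submodule.smul_mem _ _ (tmul_mem_DD 0 (-1) 0 1 1 0 mem_W_G mem_W_g (by norm_num)
        (by norm_num) (by norm_num)))
  have hDsa : Δ (star a) ∈ DD a g (-1, 0) := by
    rw [hdsa]
    exact sub_mem
      (tmul_mem_DD (-1) 0 (-1) 0 (-1) 0 mem_W_sa mem_W_sa (by norm_num) (by norm_num)
        (by norm_num))
      (Submodule.smul_mem _ _ (tmul_mem_DD 0 1 0 (-1) (-1) 0 mem_W_g mem_W_G (by norm_num)
        (by norm_num) (by norm_num)))
  have hDg : Δ g ∈ DD a g (0, 1) := by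
    rw [hdg]
    exact add_mem
      (tmul_mem_DD 0 1 1 0 0 1 mem_W_g mem_W_a (by norm_num) (by norm_num) (by norm_num))
      (tmul_mem_DD (-1) 0 0 1 0 1 mem_W_sa mem_W_g (by norm_num) (by norm_num) (by norm_num))
  have hDG : Δ (star g) ∈ DD a g (0, -1) := by
    rw [hdsg]
    exact add_mem
      (tmul_mem_DD 0 (-1) (-1) 0 0 (-1) mem_W_G mem_W_sa (by norm_num) (by norm_num)
        (by norm_num))
      (tmul_mem_DD 1 0 0 (-1) 0 (-1) mem_W_a mem_W_G (by norm_num) (by norm_num)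
        (by norm_num))
  have hDapow : ∀ j : ℕ, Δ (a ^ j) ∈ DD a g ((j : ℤ), 0) := by
    intro j
    induction j with
    | zero => simpa using hD1
    | succ j ih =>
      rw [pow_succ, hmul]
      exact mu_DD' hq hrel hμ (j : ℤ) 0 1 0 _ _ (by push_cast; ring) (by ring) ih hDa
  have hDsapow : ∀ j : ℕ, Δ ((star a) ^ j) ∈ DD a g (-(j : ℤ), 0) := by
    intro j
    induction j with
    | zero => simpa using hD1
    | succ j ih =>
      rw [pow_succ, hmul]
      exact mu_DD' hq hrel hμ (-(j : ℤ)) 0 (-1) 0 _ _ (by push_cast; ring) (by ring) ih hDsa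
  have hDgpow : ∀ j : ℕ, Δ (g ^ j) ∈ DD a g (0, (j : ℤ)) := by
    intro j
    induction j with
    | zero => simpa using hD1
    | succ j ih =>
      rw [pow_succ, hmul]
      exact mu_DD' hq hrel hμ 0 (j : ℤ) 0 1 _ _ (by ring) (by push_cast; ring) ih hDg
  have hDGpow : ∀ j : ℕ, Δ ((star g) ^ j) ∈ DD a g (0, -(j : ℤ)) := by
    intro j
    induction j with
    | zero => simpa using hD1
    | succ j ih =>
      rw [pow_succ, hmul]
      exact mu_DD' hq hrel hμ 0 (-(j : ℤ)) 0 (-1) _ _ (by ring) (by push_cast; ring) ih hDG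
  have hDApow : ∀ n : ℤ, Δ (Apow a n) ∈ DD a g (n, 0) := by
    intro n
    by_cases hn : 0 ≤ n
    · have h := hDapow n.toNat
      rw [Int.toNat_of_nonneg hn] at h
      simpa [Apow, if_pos hn] using h
    · have h := hDsapow (-n).toNat
      rw [Int.toNat_of_nonneg (by omega : (0 : ℤ) ≤ -n), neg_neg] at h
      simpa [Apow, if_neg hn] using h
  obtain ⟨n, m, k⟩ := i
  rw [suqMono_def, hmul, hmul]
  refine mu_DD' hq hrel hμ n (m : ℤ) 0 (-(k : ℤ)) n ((m : ℤ) - k) (by ring) (by ring)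
    ?_ (hDGpow k)
  exact mu_DD' hq hrel hμ n 0 0 (m : ℤ) n (m : ℤ) (by ring) (by ring) (hDApow n) (hDgpow m)

lemma DD_map_smul {a g : A} (f1 f2 : A →ₗ[ℂ] A) (c1 c2 : ℤ × ℤ → ℂ) (s : ℂ) (d : ℤ × ℤ)
    (hf1 : ∀ (d1 : ℤ × ℤ) (u : A), u ∈ W a g d1 → f1 u = c1 d1 • u)
    (hf2 : ∀ (d2 : ℤ × ℤ) (v : A), v ∈ W a g d2 → f2 v = c2 d2 • v)
    (hs : ∀ d1 d2 : ℤ × ℤ, d1.2 - d1.1 = d.2 - d.1 → d2.2 + d2.1 = d.2 + d.1 →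
      d1.2 + d2.2 = d.2 → c1 d1 * c2 d2 = s) :
    ∀ z ∈ DD a g d, TensorProduct.map f1 f2 z = s • z := by
  refine DD_induction (p := fun z => TensorProduct.map f1 f2 z = s • z) ?_ ?_ ?_ ?_
  · intro d1 d2 u v hu hv e1 e2 e3
    rw [TensorProduct.map_tmul, hf1 d1 u hu, hf2 d2 v hv, ← TensorProduct.smul_tmul',
      TensorProduct.tmul_smul, smul_smul, hs d1 d2 e1 e2 e3]
  · show TensorProduct.map f1 f2 0 = s • (0 : A ⊗[ℂ] A)
    rw [map_zero, smul_zero]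
  · intro x y hx hy
    show TensorProduct.map f1 f2 (x + y) = s • (x + y)
    rw [map_add, hx, hy, smul_add]
  · intro c x hx
    show TensorProduct.map f1 f2 (c • x) = s • (c • x)
    rw [map_smul, hx, smul_comm]

end SUqAux

/-- Each `τ_t` and `σ_t` is a unital algebra automorphism of `𝒜`, the two
groups commute, and `Δ∘τ_t = (τ_t⊗τ_t)∘Δ = (σ_t⊗σ_{-t})∘Δ`,
`Δ∘σ_t = (τ_t⊗σ_t)∘Δ = (σ_t⊗τ_{-t})∘Δ`. -/
theorem suq_scaling_modular {A : Type*} [Ring A] [Algebra ℂ A] [StarRing A] [StarModule ℂ A]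
    (q : ℂ) (hq0 : 0 < ‖q‖) (hq1 : ‖q‖ < 1)
    (a g : A) (hrel : SUqRel q a g) (hbasis : SUqBasis a g)
    (μ : A ⊗[ℂ] A →ₗ[ℂ] A ⊗[ℂ] A →ₗ[ℂ] A ⊗[ℂ] A) (hμ : SUqBraidedMul q a g μ)
    (Δ : A →ₗ[ℂ] A ⊗[ℂ] A) (hΔ : SUqComul q a g μ Δ)
    (τ : ℝ → (A →ₗ[ℂ] A)) (hτ : SUqScaling q a g τ)
    (σ : ℝ → (A →ₗ[ℂ] A)) (hσ : SUqModular q a g σ) :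
    (∀ t : ℝ, τ t 1 = 1 ∧ (∀ x y : A, τ t (x * y) = τ t x * τ t y) ∧
      Function.Bijective (τ t)) ∧
    (∀ t : ℝ, σ t 1 = 1 ∧ (∀ x y : A, σ t (x * y) = σ t x * σ t y) ∧
      Function.Bijective (σ t)) ∧
    (∀ s t : ℝ, ∀ x : A, τ t (σ s x) = σ s (τ t x)) ∧
    (∀ t : ℝ, ∀ x : A,
      Δ (τ t x) = (TensorProduct.map (τ t) (τ t)) (Δ x) ∧
      Δ (τ t x) = (TensorProduct.map (σ t) (σ (-t))) (Δ x) ∧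
      Δ (σ t x) = (TensorProduct.map (τ t) (σ t)) (Δ x) ∧
      Δ (σ t x) = (TensorProduct.map (σ t) (τ (-t))) (Δ x)) := by
  have hqne : q ≠ 0 := by
    intro h
    rw [h] at hq0
    simp at hq0
  have hall : ∀ (P : A → Prop),
      (∀ i : ℤ × ℕ × ℕ, P (suqMono a g i)) → P 0 → (∀ u v, P u → P v → P (u + v)) →
      (∀ (c : ℂ) (u), P u → P (c • u)) → ∀ x, P x := by
    intro P hmem h0 hadd hsmul x
    have hx : x ∈ Submodule.span ℂ (Set.range (suqMono a g)) := by
      rw [hbasis.2]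
      exact Submodule.mem_top
    refine Submodule.span_induction (p := fun y _ => P y) (fun y hy => ?_) h0
      (fun u v _ _ => hadd u v) (fun c u _ => hsmul c u) hx
    obtain ⟨i, rfl⟩ := hy
    exact hmem i
  have htau_mono : ∀ (t : ℝ) (i : ℤ × ℕ × ℕ),
      τ t (suqMono a g i) = SUqAux.Efun q t ^ ((i.2.1 : ℤ) - i.2.2) • suqMono a g i :=
    fun t i => SUqAux.tau_on_W hτ t i.1 _ (SUqAux.mono_mem a g i)
  have hsig_mono : ∀ (t : ℝ) (i : ℤ × ℕ × ℕ),
      σ t (suqMono a g i) = SUqAux.Efun q t ^ (-i.1) • suqMono a g i :=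
    fun t i => SUqAux.sigma_on_W hσ t i.1 _ (SUqAux.mono_mem a g i)
  have hmul_of : ∀ (F : A →ₗ[ℂ] A),
      (∀ (d e : ℤ × ℤ) (u v : A), u ∈ SUqAux.W a g d → v ∈ SUqAux.W a g e →
        F (u * v) = F u * F v) →
      ∀ x y, F (x * y) = F x * F y := by
    intro F hkey x y
    have step1 : ∀ (u : A), (∃ d : ℤ × ℤ, u ∈ SUqAux.W a g d) → ∀ v : A,
        F (u * v) = F u * F v := by
      intro u hu v
      obtain ⟨d, hd⟩ := hu
      have mem : ∀ i : ℤ × ℕ × ℕ, F (u * suqMono a g i) = F u * F (suqMono a g i) :=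
        fun i => hkey d _ u _ hd (SUqAux.mono_mem a g i)
      have z0 : F (u * (0 : A)) = F u * F 0 := by rw [mul_zero, map_zero, mul_zero]
      have zadd : ∀ v w : A, F (u * v) = F u * F v → F (u * w) = F u * F w →
          F (u * (v + w)) = F u * F (v + w) := by
        intro v w hv hw
        rw [mul_add, map_add, hv, hw, map_add, mul_add]
      have zsmul : ∀ (c : ℂ) (v : A), F (u * v) = F u * F v →
          F (u * (c • v)) = F u * F (c • v) := by
        intro c v hv
        rw [mul_smul_comm, map_smul, map_smul, hv, mul_smul_comm]
      exact hall (fun v => F (u * v) = F u * F v) mem z0 zadd zsmul v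
    have mem : ∀ i : ℤ × ℕ × ℕ, F (suqMono a g i * y) = F (suqMono a g i) * F y :=
      fun i => step1 _ ⟨_, SUqAux.mono_mem a g i⟩ y
    have z0 : F ((0 : A) * y) = F 0 * F y := by rw [zero_mul, map_zero, zero_mul]
    have zadd : ∀ u w : A, F (u * y) = F u * F y → F (w * y) = F w * F y →
        F ((u + w) * y) = F (u + w) * F y := by
      intro u w hu hw
      rw [add_mul, map_add, hu, hw, map_add, add_mul]
    have zsmul : ∀ (c : ℂ) (u : A), F (u * y) = F u * F y →
        F ((c • u) * y) = F (c • u) * F y := by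
      intro c u hu
      rw [smul_mul_assoc, map_smul, map_smul, hu, smul_mul_assoc]
    exact hall (fun x => F (x * y) = F x * F y) mem z0 zadd zsmul x
  have hkeyτ : ∀ (t : ℝ) (d e : ℤ × ℤ) (u v : A), u ∈ SUqAux.W a g d →
      v ∈ SUqAux.W a g e → τ t (u * v) = τ t u * τ t v := by
    intro t d e u v hu hv
    rw [SUqAux.tau_on_W hτ t (d.1 + e.1) (d.2 + e.2) (SUqAux.W_mul2 hqne hrel d e hu hv),
      SUqAux.tau_on_W hτ t d.1 d.2 hu, SUqAux.tau_on_W hτ t e.1 e.2 hv,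
      smul_mul_assoc, mul_smul_comm, smul_smul, ← zpow_add₀ (SUqAux.Efun_ne q t)]
  have hkeyσ : ∀ (t : ℝ) (d e : ℤ × ℤ) (u v : A), u ∈ SUqAux.W a g d →
      v ∈ SUqAux.W a g e → σ t (u * v) = σ t u * σ t v := by
    intro t d e u v hu hv
    rw [SUqAux.sigma_on_W hσ t (d.1 + e.1) (d.2 + e.2) (SUqAux.W_mul2 hqne hrel d e hu hv),
      SUqAux.sigma_on_W hσ t d.1 d.2 hu, SUqAux.sigma_on_W hσ t e.1 e.2 hv,
      smul_mul_assoc, mul_smul_comm, smul_smul, ← zpow_add₀ (SUqAux.Efun_ne q t),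
      show -d.1 + -e.1 = -(d.1 + e.1) by ring]
  have hτ1 : ∀ t : ℝ, τ t 1 = 1 := by
    intro t
    have h := SUqAux.tau_on_W hτ t 0 0 (SUqAux.mem_W_one (a := a) (g := g))
    simpa using h
  have hσ1 : ∀ t : ℝ, σ t 1 = 1 := by
    intro t
    have h := SUqAux.sigma_on_W hσ t 0 0 (SUqAux.mem_W_one (a := a) (g := g))
    simpa using h
  have hτinv : ∀ (t : ℝ) (x : A), τ (-t) (τ t x) = x := by
    intro t x
    have mem : ∀ i : ℤ × ℕ × ℕ, τ (-t) (τ t (suqMono a g i)) = suqMono a g i := by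
      intro i
      rw [htau_mono t i, map_smul, htau_mono (-t) i, smul_smul, SUqAux.Efun_neg, inv_zpow,
        mul_inv_cancel₀ (zpow_ne_zero _ (SUqAux.Efun_ne q t)), one_smul]
    have z0 : τ (-t) (τ t (0 : A)) = 0 := by rw [map_zero, map_zero]
    have zadd : ∀ u v : A, τ (-t) (τ t u) = u → τ (-t) (τ t v) = v →
        τ (-t) (τ t (u + v)) = u + v := by
      intro u v hu hv
      rw [map_add, map_add, hu, hv]
    have zsmul : ∀ (c : ℂ) (u : A), τ (-t) (τ t u) = u → τ (-t) (τ t (c • u)) = c • u := by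
      intro c u hu
      rw [map_smul, map_smul, hu]
    exact hall (fun x => τ (-t) (τ t x) = x) mem z0 zadd zsmul x
  have hσinv : ∀ (t : ℝ) (x : A), σ (-t) (σ t x) = x := by
    intro t x
    have mem : ∀ i : ℤ × ℕ × ℕ, σ (-t) (σ t (suqMono a g i)) = suqMono a g i := by
      intro i
      rw [hsig_mono t i, map_smul, hsig_mono (-t) i, smul_smul, SUqAux.Efun_neg, inv_zpow,
        mul_inv_cancel₀ (zpow_ne_zero _ (SUqAux.Efun_ne q t)), one_smul]
    have z0 : σ (-t) (σ t (0 : A)) = 0 := by rw [map_zero, map_zero]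
    have zadd : ∀ u v : A, σ (-t) (σ t u) = u → σ (-t) (σ t v) = v →
        σ (-t) (σ t (u + v)) = u + v := by
      intro u v hu hv
      rw [map_add, map_add, hu, hv]
    have zsmul : ∀ (c : ℂ) (u : A), σ (-t) (σ t u) = u → σ (-t) (σ t (c • u)) = c • u := by
      intro c u hu
      rw [map_smul, map_smul, hu]
    exact hall (fun x => σ (-t) (σ t x) = x) mem z0 zadd zsmul x
  have hcomm : ∀ (s t : ℝ) (x : A), τ t (σ s x) = σ s (τ t x) := by
    intro s t x
    have mem : ∀ i : ℤ × ℕ × ℕ,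
        τ t (σ s (suqMono a g i)) = σ s (τ t (suqMono a g i)) := by
      intro i
      rw [hsig_mono s i, htau_mono t i, map_smul, map_smul, htau_mono t i, hsig_mono s i,
        smul_smul, smul_smul, mul_comm]
    have z0 : τ t (σ s (0 : A)) = σ s (τ t (0 : A)) := by simp
    have zadd : ∀ u v : A, τ t (σ s u) = σ s (τ t u) → τ t (σ s v) = σ s (τ t v) →
        τ t (σ s (u + v)) = σ s (τ t (u + v)) := by
      intro u v hu hv
      simp only [map_add, hu, hv]
    have zsmul : ∀ (c : ℂ) (u : A), τ t (σ s u) = σ s (τ t u) →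
        τ t (σ s (c • u)) = σ s (τ t (c • u)) := by
      intro c u hu
      simp only [map_smul, hu]
    exact hall (fun x => τ t (σ s x) = σ s (τ t x)) mem z0 zadd zsmul x
  have hDmono : ∀ i : ℤ × ℕ × ℕ,
      Δ (suqMono a g i) ∈ SUqAux.DD a g (i.1, (i.2.1 : ℤ) - i.2.2) :=
    fun i => SUqAux.Delta_mono_mem hqne hrel hμ hΔ i
  have hIdgen : ∀ (F G1 G2 : A →ₗ[ℂ] A) (c : ℤ × ℤ → ℂ),
      (∀ i : ℤ × ℕ × ℕ, F (suqMono a g i) = c (i.1, (i.2.1 : ℤ) - i.2.2) • suqMono a g i) →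
      (∀ d : ℤ × ℤ, ∀ z ∈ SUqAux.DD a g d, TensorProduct.map G1 G2 z = c d • z) →
      ∀ x, Δ (F x) = TensorProduct.map G1 G2 (Δ x) := by
    intro F G1 G2 c hF hG
    have mem : ∀ i : ℤ × ℕ × ℕ,
        Δ (F (suqMono a g i)) = TensorProduct.map G1 G2 (Δ (suqMono a g i)) := by
      intro i
      rw [hF i, map_smul, hG _ _ (hDmono i)]
    have z0 : Δ (F (0 : A)) = TensorProduct.map G1 G2 (Δ 0) := by simp
    have zadd : ∀ u v : A, Δ (F u) = TensorProduct.map G1 G2 (Δ u) →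
        Δ (F v) = TensorProduct.map G1 G2 (Δ v) →
        Δ (F (u + v)) = TensorProduct.map G1 G2 (Δ (u + v)) := by
      intro u v hu hv
      simp only [map_add, hu, hv]
    have zsmul : ∀ (c' : ℂ) (u : A), Δ (F u) = TensorProduct.map G1 G2 (Δ u) →
        Δ (F (c' • u)) = TensorProduct.map G1 G2 (Δ (c' • u)) := by
      intro c' u hu
      simp only [map_smul, hu]
    exact hall (fun x => Δ (F x) = TensorProduct.map G1 G2 (Δ x)) mem z0 zadd zsmul
  have hfτ : ∀ (t : ℝ) (d1 : ℤ × ℤ) (u : A), u ∈ SUqAux.W a g d1 →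
      τ t u = SUqAux.Efun q t ^ d1.2 • u :=
    fun t d1 u hu => SUqAux.tau_on_W hτ t d1.1 d1.2 hu
  have hfσ : ∀ (t : ℝ) (d1 : ℤ × ℤ) (u : A), u ∈ SUqAux.W a g d1 →
      σ t u = SUqAux.Efun q t ^ (-d1.1) • u :=
    fun t d1 u hu => SUqAux.sigma_on_W hσ t d1.1 d1.2 hu
  have hfτneg : ∀ (t : ℝ) (d1 : ℤ × ℤ) (u : A), u ∈ SUqAux.W a g d1 →
      τ (-t) u = SUqAux.Efun q t ^ (-d1.2) • u := by
    intro t d1 u hu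
    rw [hfτ (-t) d1 u hu, SUqAux.Efun_neg, inv_zpow, ← zpow_neg]
  have hfσneg : ∀ (t : ℝ) (d1 : ℤ × ℤ) (u : A), u ∈ SUqAux.W a g d1 →
      σ (-t) u = SUqAux.Efun q t ^ d1.1 • u := by
    intro t d1 u hu
    rw [hfσ (-t) d1 u hu, SUqAux.Efun_neg, inv_zpow, ← zpow_neg, neg_neg]
  have Id1 : ∀ (t : ℝ) (x : A), Δ (τ t x) = TensorProduct.map (τ t) (τ t) (Δ x) := by
    intro t
    refine hIdgen (τ t) (τ t) (τ t) (fun d => SUqAux.Efun q t ^ d.2) (htau_mono t) ?_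
    intro d z hz
    refine SUqAux.DD_map_smul (τ t) (τ t) (fun d1 => SUqAux.Efun q t ^ d1.2)
      (fun d2 => SUqAux.Efun q t ^ d2.2) (SUqAux.Efun q t ^ d.2) d (hfτ t) (hfτ t)
      ?_ z hz
    intro d1 d2 e1 e2 e3
    show SUqAux.Efun q t ^ d1.2 * SUqAux.Efun q t ^ d2.2 = SUqAux.Efun q t ^ d.2
    rw [show d.2 = d1.2 + d2.2 by omega, zpow_add₀ (SUqAux.Efun_ne q t)]
  have Id2 : ∀ (t : ℝ) (x : A), Δ (τ t x) = TensorProduct.map (σ t) (σ (-t)) (Δ x) := by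
    intro t
    refine hIdgen (τ t) (σ t) (σ (-t)) (fun d => SUqAux.Efun q t ^ d.2) (htau_mono t) ?_
    intro d z hz
    refine SUqAux.DD_map_smul (σ t) (σ (-t)) (fun d1 => SUqAux.Efun q t ^ (-d1.1))
      (fun d2 => SUqAux.Efun q t ^ d2.1) (SUqAux.Efun q t ^ d.2) d (hfσ t) (hfσneg t)
      ?_ z hz
    intro d1 d2 e1 e2 e3
    show SUqAux.Efun q t ^ (-d1.1) * SUqAux.Efun q t ^ d2.1 = SUqAux.Efun q t ^ d.2
    rw [show d.2 = -d1.1 + d2.1 by omega, zpow_add₀ (SUqAux.Efun_ne q t)]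
  have Id3 : ∀ (t : ℝ) (x : A), Δ (σ t x) = TensorProduct.map (τ t) (σ t) (Δ x) := by
    intro t
    refine hIdgen (σ t) (τ t) (σ t) (fun d => SUqAux.Efun q t ^ (-d.1)) (hsig_mono t) ?_
    intro d z hz
    refine SUqAux.DD_map_smul (τ t) (σ t) (fun d1 => SUqAux.Efun q t ^ d1.2)
      (fun d2 => SUqAux.Efun q t ^ (-d2.1)) (SUqAux.Efun q t ^ (-d.1)) d (hfτ t) (hfσ t)
      ?_ z hz
    intro d1 d2 e1 e2 e3
    show SUqAux.Efun q t ^ d1.2 * SUqAux.Efun q t ^ (-d2.1) = SUqAux.Efun q t ^ (-d.1)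
    rw [show -d.1 = d1.2 + -d2.1 by omega, zpow_add₀ (SUqAux.Efun_ne q t)]
  have Id4 : ∀ (t : ℝ) (x : A), Δ (σ t x) = TensorProduct.map (σ t) (τ (-t)) (Δ x) := by
    intro t
    refine hIdgen (σ t) (σ t) (τ (-t)) (fun d => SUqAux.Efun q t ^ (-d.1)) (hsig_mono t) ?_
    intro d z hz
    refine SUqAux.DD_map_smul (σ t) (τ (-t)) (fun d1 => SUqAux.Efun q t ^ (-d1.1))
      (fun d2 => SUqAux.Efun q t ^ (-d2.2)) (SUqAux.Efun q t ^ (-d.1)) d (hfσ t) (hfτneg t)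
      ?_ z hz
    intro d1 d2 e1 e2 e3
    show SUqAux.Efun q t ^ (-d1.1) * SUqAux.Efun q t ^ (-d2.2) = SUqAux.Efun q t ^ (-d.1)
    rw [show -d.1 = -d1.1 + -d2.2 by omega, zpow_add₀ (SUqAux.Efun_ne q t)]
  refine ⟨?_, ?_, ?_, ?_⟩
  · intro t
    refine ⟨hτ1 t, hmul_of (τ t) (hkeyτ t), ?_⟩
    refine Function.bijective_iff_has_inverse.mpr ⟨τ (-t), fun x => hτinv t x, fun x => ?_⟩
    have h := hτinv (-t) x
    rwa [neg_neg] at h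
  · intro t
    refine ⟨hσ1 t, hmul_of (σ t) (hkeyσ t), ?_⟩
    refine Function.bijective_iff_has_inverse.mpr ⟨σ (-t), fun x => hσinv t x, fun x => ?_⟩
    have h := hσinv (-t) x
    rwa [neg_neg] at h
  · intro s t x
    exact hcomm s t x
  · intro t x
    exact ⟨Id1 t x, Id2 t x, Id3 t x, Id4 t x⟩
end
end

section
/- Let N ≥ 1 and let u = (u_{ij}) ∈ Mat_N(𝒜) satisfy Σ_k u_{ik}(u_{jk})* = δ_{ij}·1 = Σ_k (u_{ki})*·u_{kj} for all i, j (i.e. u is a unitary matrix over 𝒜), and Δ(u_{ij}) = Σ_{k=1}^N u_{ik} ⊗ u_{kj} for all i, j (i.e. u is a corepresentation matrix). Then ε(u_{ij}) = δ_{ij} and S(u_{ij}) = (u_{ji})* for all i, j. -/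
open scoped TensorProduct

noncomputable section

set_option linter.unusedSectionVars false
set_option maxHeartbeats 1000000

section SUqHelpers
variable {A : Type*} [Ring A] [Algebra ℂ A] [StarRing A] (a g : A)

lemma suqMono_zero : suqMono a g (0,0,0) = 1 := by simp [suqMono]

lemma mono_mem (i : ℤ × ℕ × ℕ) : suqMono a g i ∈ suqHomog a g ((i.2.1 : ℤ) - i.2.2) :=
  Submodule.subset_span ⟨i, rfl, rfl⟩

lemma a_mem : a ∈ suqHomog a g 0 := by
  have := mono_mem a g (1,0,0); simpa [suqMono] using this

lemma sa_mem : star a ∈ suqHomog a g 0 := by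
  have := mono_mem a g (-1,0,0); simpa [suqMono] using this

lemma g_mem : g ∈ suqHomog a g 1 := by
  have := mono_mem a g (0,1,0); simpa [suqMono] using this

lemma sg_mem : star g ∈ suqHomog a g (-1) := by
  have := mono_mem a g (0,0,1); simpa [suqMono] using this

/-- `φ(x ⊗ y) = ε(y) • x`. -/
def suqPhi (ε : A →ₐ[ℂ] ℂ) : A ⊗[ℂ] A →ₗ[ℂ] A :=
  TensorProduct.lift ((LinearMap.lsmul ℂ A).comp ε.toLinearMap).flip

@[simp] lemma suqPhi_tmul (ε : A →ₐ[ℂ] ℂ) (x y : A) :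
    suqPhi ε (x ⊗ₜ[ℂ] y) = ε y • x := rfl

/-- `T(x ⊗ y) = S(x) * y`. -/
def suqT (S : A →ₗ[ℂ] A) : A ⊗[ℂ] A →ₗ[ℂ] A :=
  (LinearMap.mul' ℂ A).comp (LinearMap.rTensor A S)

@[simp] lemma suqT_tmul (S : A →ₗ[ℂ] A) (x y : A) :
    suqT S (x ⊗ₜ[ℂ] y) = S x * y := rfl

lemma ext_helper (hspan : Submodule.span ℂ (Set.range (suqMono a g)) = ⊤)
    (F G : A ⊗[ℂ] A →ₗ[ℂ] A)
    (h : ∀ (i : ℤ × ℕ × ℕ) (w : A), F (suqMono a g i ⊗ₜ[ℂ] w) = G (suqMono a g i ⊗ₜ[ℂ] w)) :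
    F = G := by
  apply TensorProduct.ext
  apply LinearMap.ext_on hspan
  rintro z ⟨i, rfl⟩
  ext w
  exact h i w

variable (q : ℂ) (S : A →ₗ[ℂ] A) (ε : A →ₐ[ℂ] ℂ)
  (μ : A ⊗[ℂ] A →ₗ[ℂ] A ⊗[ℂ] A →ₗ[ℂ] A ⊗[ℂ] A) (Δ : A →ₗ[ℂ] A ⊗[ℂ] A)

lemma phi_gen_a (hεa : ε a = 1) (hεg : ε g = 0)
    (hμ : SUqBraidedMul q a g μ) (hd : Δ a = a ⊗ₜ[ℂ] a - q • ((star g) ⊗ₜ[ℂ] g))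
    (i : ℤ × ℕ × ℕ) (w : A) :
    suqPhi ε (μ (Δ a) (suqMono a g i ⊗ₜ[ℂ] w))
      = a * suqPhi ε (suqMono a g i ⊗ₜ[ℂ] w) := by
  set z := suqMono a g i with hz
  have hzm : z ∈ suqHomog a g ((i.2.1:ℤ) - i.2.2) := mono_mem a g i
  rw [hd, map_sub, map_smul, LinearMap.sub_apply, LinearMap.smul_apply,
    hμ a w 0 _ a (a_mem a g) z hzm, hμ (star g) w 1 _ g (g_mem a g) z hzm]
  simp [map_mul, hεa, hεg, mul_smul_comm]

lemma phi_gen_g (hεa : ε a = 1) (hεg : ε g = 0)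
    (hμ : SUqBraidedMul q a g μ) (hd : Δ g = g ⊗ₜ[ℂ] a + (star a) ⊗ₜ[ℂ] g)
    (i : ℤ × ℕ × ℕ) (w : A) :
    suqPhi ε (μ (Δ g) (suqMono a g i ⊗ₜ[ℂ] w))
      = g * suqPhi ε (suqMono a g i ⊗ₜ[ℂ] w) := by
  set z := suqMono a g i with hz
  have hzm : z ∈ suqHomog a g ((i.2.1:ℤ) - i.2.2) := mono_mem a g i
  rw [hd, map_add, LinearMap.add_apply,
    hμ g w 0 _ a (a_mem a g) z hzm, hμ (star a) w 1 _ g (g_mem a g) z hzm]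
  simp [map_mul, hεa, hεg, mul_smul_comm]

lemma phi_gen_sa (hεsa : ε (star a) = 1) (hεsg : ε (star g) = 0)
    (hμ : SUqBraidedMul q a g μ)
    (hd : Δ (star a) = (star a) ⊗ₜ[ℂ] (star a) - q • (g ⊗ₜ[ℂ] (star g)))
    (i : ℤ × ℕ × ℕ) (w : A) :
    suqPhi ε (μ (Δ (star a)) (suqMono a g i ⊗ₜ[ℂ] w))
      = star a * suqPhi ε (suqMono a g i ⊗ₜ[ℂ] w) := by
  set z := suqMono a g i with hz
  have hzm : z ∈ suqHomog a g ((i.2.1:ℤ) - i.2.2) := mono_mem a g i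
  rw [hd, map_sub, map_smul, LinearMap.sub_apply, LinearMap.smul_apply,
    hμ (star a) w 0 _ (star a) (sa_mem a g) z hzm,
    hμ g w (-1) _ (star g) (sg_mem a g) z hzm]
  simp [map_mul, hεsa, hεsg, mul_smul_comm]

lemma phi_gen_sg (hεsa : ε (star a) = 1) (hεsg : ε (star g) = 0)
    (hμ : SUqBraidedMul q a g μ)
    (hd : Δ (star g) = (star g) ⊗ₜ[ℂ] (star a) + a ⊗ₜ[ℂ] (star g))
    (i : ℤ × ℕ × ℕ) (w : A) :
    suqPhi ε (μ (Δ (star g)) (suqMono a g i ⊗ₜ[ℂ] w))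
      = star g * suqPhi ε (suqMono a g i ⊗ₜ[ℂ] w) := by
  set z := suqMono a g i with hz
  have hzm : z ∈ suqHomog a g ((i.2.1:ℤ) - i.2.2) := mono_mem a g i
  rw [hd, map_add, LinearMap.add_apply,
    hμ (star g) w 0 _ (star a) (sa_mem a g) z hzm,
    hμ a w (-1) _ (star g) (sg_mem a g) z hzm]
  simp [map_mul, hεsa, hεsg, mul_smul_comm]

lemma zeta_ne (hq : q ≠ 0) : (q / starRingEnd ℂ q) ≠ 0 := by
  have h2 : starRingEnd ℂ q ≠ 0 := by
    intro h
    apply hq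
    have := congrArg (starRingEnd ℂ) h
    simpa using this
  exact div_ne_zero hq h2

lemma zeta_cancel (hq : q ≠ 0) (s : ℤ) :
    (q / starRingEnd ℂ q) ^ (-s) * (q / starRingEnd ℂ q) ^ s = 1 := by
  rw [← zpow_add₀ (zeta_ne q hq), neg_add_cancel, zpow_zero]

lemma T_gen_a (hq : q ≠ 0) (hrel : SUqRel q a g) (hμ : SUqBraidedMul q a g μ)
    (hS : SUqAntipode q a g S)
    (hd : Δ a = a ⊗ₜ[ℂ] a - q • ((star g) ⊗ₜ[ℂ] g))
    (i : ℤ × ℕ × ℕ) (w : A) :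
    suqT S (μ (Δ a) (suqMono a g i ⊗ₜ[ℂ] w))
      = suqT S (suqMono a g i ⊗ₜ[ℂ] w) := by
  set z := suqMono a g i with hz
  set s : ℤ := (i.2.1:ℤ) - i.2.2 with hs
  have hzm : z ∈ suqHomog a g s := mono_mem a g i
  have hanti := hS.2.2.2.2.2.2
  rw [hd, map_sub, map_smul, LinearMap.sub_apply, LinearMap.smul_apply,
    hμ a w 0 _ a (a_mem a g) z hzm, hμ (star g) w 1 _ g (g_mem a g) z hzm]
  simp only [map_sub, map_smul, suqT_tmul]
  rw [hanti 0 s a (a_mem a g) z hzm, hanti (-1) s (star g) (sg_mem a g) z hzm,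
    hS.2.1, hS.2.2.2.2.1]
  simp only [zero_mul, neg_zero, zpow_zero, one_smul, one_mul, neg_mul, neg_neg,
    mul_smul_comm, smul_mul_assoc, smul_smul, smul_neg, neg_smul, mul_neg]
  have hsc : q * ((q / starRingEnd ℂ q) ^ (-s) * ((q / starRingEnd ℂ q) ^ s * q⁻¹)) = 1 := by
    have h1 := zeta_cancel q hq s
    calc q * ((q / starRingEnd ℂ q) ^ (-s) * ((q / starRingEnd ℂ q) ^ s * q⁻¹))
        = ((q / starRingEnd ℂ q) ^ (-s) * (q / starRingEnd ℂ q) ^ s) * (q * q⁻¹) := by ring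
      _ = 1 := by rw [h1, mul_inv_cancel₀ hq, one_mul]
  rw [hsc, one_smul, sub_neg_eq_add]
  have : S z * star a * (a * w) + S z * star g * (g * w)
      = S z * ((star a * a + star g * g) * w) := by noncomm_ring
  rw [this, hrel.1, one_mul]

lemma T_gen_g (hq : q ≠ 0) (hrel : SUqRel q a g) (hμ : SUqBraidedMul q a g μ)
    (hS : SUqAntipode q a g S)
    (hd : Δ g = g ⊗ₜ[ℂ] a + (star a) ⊗ₜ[ℂ] g)
    (i : ℤ × ℕ × ℕ) (w : A) :
    suqT S (μ (Δ g) (suqMono a g i ⊗ₜ[ℂ] w)) = 0 := by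
  set z := suqMono a g i with hz
  set s : ℤ := (i.2.1:ℤ) - i.2.2 with hs
  have hzm : z ∈ suqHomog a g s := mono_mem a g i
  have hanti := hS.2.2.2.2.2.2
  rw [hd, map_add, LinearMap.add_apply,
    hμ g w 0 _ a (a_mem a g) z hzm, hμ (star a) w 1 _ g (g_mem a g) z hzm]
  simp only [map_add, map_smul, suqT_tmul]
  rw [hanti 1 s g (g_mem a g) z hzm, hanti 0 s (star a) (sa_mem a g) z hzm,
    hS.2.2.2.1, hS.2.2.1]
  simp only [zero_mul, neg_zero, zpow_zero, one_smul, one_mul, neg_mul, neg_neg,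
    mul_smul_comm, smul_mul_assoc, smul_smul, smul_neg, neg_smul, mul_neg]
  have key : S z * a * (g * w) = starRingEnd ℂ q • (S z * g * (a * w)) := by
    calc S z * a * (g * w) = S z * ((a * g) * w) := by noncomm_ring
      _ = S z * ((starRingEnd ℂ q • (g * a)) * w) := by rw [hrel.2.2.2.1]
      _ = starRingEnd ℂ q • (S z * g * (a * w)) := by
          simp only [smul_mul_assoc, mul_smul_comm]
          congr 1
          noncomm_ring
  rw [key, smul_smul]
  exact neg_add_cancel _

lemma T_gen_sa (hq : q ≠ 0) (hrel : SUqRel q a g) (hμ : SUqBraidedMul q a g μ)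
    (hS : SUqAntipode q a g S)
    (hd : Δ (star a) = (star a) ⊗ₜ[ℂ] (star a) - q • (g ⊗ₜ[ℂ] (star g)))
    (i : ℤ × ℕ × ℕ) (w : A) :
    suqT S (μ (Δ (star a)) (suqMono a g i ⊗ₜ[ℂ] w))
      = suqT S (suqMono a g i ⊗ₜ[ℂ] w) := by
  set z := suqMono a g i with hz
  set s : ℤ := (i.2.1:ℤ) - i.2.2 with hs
  have hzm : z ∈ suqHomog a g s := mono_mem a g i
  have hanti := hS.2.2.2.2.2.2
  rw [hd, map_sub, map_smul, LinearMap.sub_apply, LinearMap.smul_apply,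
    hμ (star a) w 0 _ (star a) (sa_mem a g) z hzm,
    hμ g w (-1) _ (star g) (sg_mem a g) z hzm]
  simp only [map_sub, map_smul, suqT_tmul]
  rw [hanti 0 s (star a) (sa_mem a g) z hzm, hanti 1 s g (g_mem a g) z hzm,
    hS.2.2.1, hS.2.2.2.1]
  simp only [zero_mul, neg_zero, zpow_zero, one_smul, one_mul, neg_mul, neg_neg,
    mul_smul_comm, smul_mul_assoc, smul_smul, smul_neg, neg_smul, mul_neg]
  have habs : ((‖q‖ : ℂ)) ^ 2 = q * starRingEnd ℂ q := by
    rw [Complex.mul_conj]; norm_cast; exact Complex.sq_norm q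
  have hsc : q * ((q / starRingEnd ℂ q) ^ s * ((q / starRingEnd ℂ q) ^ (-s) * starRingEnd ℂ q))
      = ((‖q‖ : ℂ)) ^ 2 := by
    calc q * ((q / starRingEnd ℂ q) ^ s * ((q / starRingEnd ℂ q) ^ (-s) * starRingEnd ℂ q))
        = ((q / starRingEnd ℂ q) ^ (-s) * (q / starRingEnd ℂ q) ^ s) * (q * starRingEnd ℂ q) := by
          ring
      _ = q * starRingEnd ℂ q := by rw [zeta_cancel q hq s, one_mul]
      _ = ((‖q‖ : ℂ)) ^ 2 := habs.symm
  rw [hsc, sub_neg_eq_add]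
  have key : S z * g * (star g * w) = S z * ((star g * g) * w) := by
    calc S z * g * (star g * w) = S z * ((g * star g) * w) := by noncomm_ring
      _ = S z * ((star g * g) * w) := by rw [hrel.2.2.1]
  rw [key]
  have hco : S z * a * (star a * w) + ((‖q‖ : ℂ)) ^ 2 • (S z * (star g * g * w))
      = S z * ((a * star a + ((‖q‖ : ℂ)) ^ 2 • (star g * g)) * w) := by
    simp only [mul_add, add_mul, smul_mul_assoc, mul_smul_comm, mul_assoc]
  rw [hco, hrel.2.1, one_mul]

lemma T_gen_sg (hq : q ≠ 0) (hrel : SUqRel q a g) [StarModule ℂ A]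
    (hμ : SUqBraidedMul q a g μ) (hS : SUqAntipode q a g S)
    (hd : Δ (star g) = (star g) ⊗ₜ[ℂ] (star a) + a ⊗ₜ[ℂ] (star g))
    (i : ℤ × ℕ × ℕ) (w : A) :
    suqT S (μ (Δ (star g)) (suqMono a g i ⊗ₜ[ℂ] w)) = 0 := by
  set z := suqMono a g i with hz
  set s : ℤ := (i.2.1:ℤ) - i.2.2 with hs
  have hzm : z ∈ suqHomog a g s := mono_mem a g i
  have hanti := hS.2.2.2.2.2.2
  rw [hd, map_add, LinearMap.add_apply,
    hμ (star g) w 0 _ (star a) (sa_mem a g) z hzm,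
    hμ a w (-1) _ (star g) (sg_mem a g) z hzm]
  simp only [map_add, map_smul, suqT_tmul]
  rw [hanti (-1) s (star g) (sg_mem a g) z hzm, hanti 0 s a (a_mem a g) z hzm,
    hS.2.2.2.2.1, hS.2.1]
  simp only [zero_mul, neg_zero, zpow_zero, one_smul, one_mul, neg_mul, neg_neg,
    mul_smul_comm, smul_mul_assoc, smul_smul, smul_neg, neg_smul, mul_neg]
  have hstar : star g * star a = q • (star a * star g) := by
    have h := congrArg star hrel.2.2.2.1
    simpa [star_mul, star_smul] using h
  have key : S z * star g * (star a * w) = q • (S z * star a * (star g * w)) := by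
    calc S z * star g * (star a * w) = S z * ((star g * star a) * w) := by noncomm_ring
      _ = S z * ((q • (star a * star g)) * w) := by rw [hstar]
      _ = q • (S z * star a * (star g * w)) := by
          simp only [smul_mul_assoc, mul_smul_comm]
          congr 1
          noncomm_ring
  rw [key, smul_smul]
  have hsc : (q / starRingEnd ℂ q) ^ s * q⁻¹ * q = (q / starRingEnd ℂ q) ^ s := by
    rw [mul_assoc, inv_mul_cancel₀ hq, mul_one]
  rw [hsc]
  exact neg_add_cancel _

lemma phiDelta (hrel : SUqRel q a g) (hbasis : SUqBasis a g)
    (hμ : SUqBraidedMul q a g μ) (hΔ : SUqComul q a g μ Δ)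
    (hεa : ε a = 1) (hεg : ε g = 0) (hεsa : ε (star a) = 1) (hεsg : ε (star g) = 0) :
    ∀ x : A, suqPhi ε (Δ x) = x := by
  have hstep : ∀ c : A, (c = a ∨ c = g ∨ c = star a ∨ c = star g) → ∀ y : A,
      suqPhi ε (Δ y) = y → suqPhi ε (Δ (c * y)) = c * y := by
    intro c hc y hy
    have hmap : (suqPhi ε).comp (μ (Δ c)) = (LinearMap.mulLeft ℂ c).comp (suqPhi ε) := by
      apply ext_helper a g hbasis.2
      intro i w
      simp only [LinearMap.comp_apply, LinearMap.mulLeft_apply]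
      rcases hc with hc | hc | hc | hc
      · rw [hc]; exact phi_gen_a a g q ε μ Δ hεa hεg hμ hΔ.2.2.1 i w
      · rw [hc]; exact phi_gen_g a g q ε μ Δ hεa hεg hμ hΔ.2.2.2.1 i w
      · rw [hc]; exact phi_gen_sa a g q ε μ Δ hεsa hεsg hμ hΔ.2.2.2.2.1 i w
      · rw [hc]; exact phi_gen_sg a g q ε μ Δ hεsa hεsg hμ hΔ.2.2.2.2.2 i w
    rw [hΔ.2.1 c y]
    have h2 := LinearMap.congr_fun hmap (Δ y)
    simp only [LinearMap.comp_apply, LinearMap.mulLeft_apply] at h2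
    rw [h2, hy]
  have hpow : ∀ c : A, (c = a ∨ c = g ∨ c = star a ∨ c = star g) → ∀ (N : ℕ) (y : A),
      suqPhi ε (Δ y) = y → suqPhi ε (Δ (c ^ N * y)) = c ^ N * y := by
    intro c hc N
    induction N with
    | zero => intro y hy; simpa using hy
    | succ n ih =>
        intro y hy
        rw [pow_succ', mul_assoc]
        exact hstep c hc _ (ih y hy)
  have h1 : suqPhi ε (Δ (1 : A)) = 1 := by rw [hΔ.1]; simp
  have hmono : ∀ i : ℤ × ℕ × ℕ, suqPhi ε (Δ (suqMono a g i)) = suqMono a g i := by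
    rintro ⟨n, m, k⟩
    have h2 := hpow (star g) (Or.inr (Or.inr (Or.inr rfl))) k 1 h1
    rw [mul_one] at h2
    have h3 := hpow g (Or.inr (Or.inl rfl)) m _ h2
    have hmm : suqMono a g (n, m, k)
        = (if 0 ≤ n then a ^ n.toNat else (star a) ^ (-n).toNat) * (g ^ m * (star g) ^ k) := by
      simp [suqMono, mul_assoc]
    rw [hmm]
    by_cases hn : 0 ≤ n
    · rw [if_pos hn]
      exact hpow a (Or.inl rfl) n.toNat _ h3
    · rw [if_neg hn]
      exact hpow (star a) (Or.inr (Or.inr (Or.inl rfl))) (-n).toNat _ h3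
  intro x
  have hfin : (suqPhi ε).comp Δ = LinearMap.id := by
    apply LinearMap.ext_on hbasis.2
    rintro z ⟨i, rfl⟩
    exact hmono i
  exact LinearMap.congr_fun hfin x

lemma TDelta (hq : q ≠ 0) (hrel : SUqRel q a g) [StarModule ℂ A] (hbasis : SUqBasis a g)
    (hμ : SUqBraidedMul q a g μ) (hΔ : SUqComul q a g μ Δ) (hS : SUqAntipode q a g S)
    (hεa : ε a = 1) (hεg : ε g = 0) (hεsa : ε (star a) = 1) (hεsg : ε (star g) = 0) :
    ∀ x : A, suqT S (Δ x) = ε x • 1 := by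
  have hstep : ∀ c : A, (c = a ∨ c = g ∨ c = star a ∨ c = star g) → ∀ y : A,
      suqT S (Δ y) = ε y • 1 → suqT S (Δ (c * y)) = ε (c * y) • 1 := by
    intro c hc y hy
    rw [hΔ.2.1 c y, map_mul]
    rcases hc with hc | hc | hc | hc <;> rw [hc]
    · have hmap : (suqT S).comp (μ (Δ a)) = suqT S := by
        apply ext_helper a g hbasis.2
        intro i w
        exact T_gen_a a g q S μ Δ hq hrel hμ hS hΔ.2.2.1 i w
      have h2 := LinearMap.congr_fun hmap (Δ y)
      simp only [LinearMap.comp_apply] at h2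
      rw [h2, hy, hεa, one_mul]
    · have hmap : (suqT S).comp (μ (Δ g)) = 0 := by
        apply ext_helper a g hbasis.2
        intro i w
        simpa using T_gen_g a g q S μ Δ hq hrel hμ hS hΔ.2.2.2.1 i w
      have h2 := LinearMap.congr_fun hmap (Δ y)
      simp only [LinearMap.comp_apply, LinearMap.zero_apply] at h2
      rw [h2, hεg, zero_mul, zero_smul]
    · have hmap : (suqT S).comp (μ (Δ (star a))) = suqT S := by
        apply ext_helper a g hbasis.2
        intro i w
        exact T_gen_sa a g q S μ Δ hq hrel hμ hS hΔ.2.2.2.2.1 i w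
      have h2 := LinearMap.congr_fun hmap (Δ y)
      simp only [LinearMap.comp_apply] at h2
      rw [h2, hy, hεsa, one_mul]
    · have hmap : (suqT S).comp (μ (Δ (star g))) = 0 := by
        apply ext_helper a g hbasis.2
        intro i w
        simpa using T_gen_sg a g q S μ Δ hq hrel hμ hS hΔ.2.2.2.2.2 i w
      have h2 := LinearMap.congr_fun hmap (Δ y)
      simp only [LinearMap.comp_apply, LinearMap.zero_apply] at h2
      rw [h2, hεsg, zero_mul, zero_smul]
  have hpow : ∀ c : A, (c = a ∨ c = g ∨ c = star a ∨ c = star g) → ∀ (N : ℕ) (y : A),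
      suqT S (Δ y) = ε y • 1 → suqT S (Δ (c ^ N * y)) = ε (c ^ N * y) • 1 := by
    intro c hc N
    induction N with
    | zero => intro y hy; simpa using hy
    | succ n ih =>
        intro y hy
        rw [pow_succ', mul_assoc]
        exact hstep c hc _ (ih y hy)
  have h1 : suqT S (Δ (1 : A)) = ε (1 : A) • 1 := by
    rw [hΔ.1]; simp [hS.1]
  have hmono : ∀ i : ℤ × ℕ × ℕ, suqT S (Δ (suqMono a g i)) = ε (suqMono a g i) • 1 := by
    rintro ⟨n, m, k⟩
    have h2 := hpow (star g) (Or.inr (Or.inr (Or.inr rfl))) k 1 h1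
    rw [mul_one] at h2
    have h3 := hpow g (Or.inr (Or.inl rfl)) m _ h2
    have hmm : suqMono a g (n, m, k)
        = (if 0 ≤ n then a ^ n.toNat else (star a) ^ (-n).toNat) * (g ^ m * (star g) ^ k) := by
      simp [suqMono, mul_assoc]
    rw [hmm]
    by_cases hn : 0 ≤ n
    · rw [if_pos hn]
      exact hpow a (Or.inl rfl) n.toNat _ h3
    · rw [if_neg hn]
      exact hpow (star a) (Or.inr (Or.inr (Or.inl rfl))) (-n).toNat _ h3
  intro x
  have hfin : (suqT S).comp Δ = ε.toLinearMap.smulRight 1 := by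
    apply LinearMap.ext_on hbasis.2
    rintro z ⟨i, rfl⟩
    simpa using hmono i
  simpa using LinearMap.congr_fun hfin x

end SUqHelpers

/-- If `u ∈ Mat_N(𝒜)` is a unitary corepresentation matrix
(`Δ(u_{ij}) = Σ_k u_{ik} ⊗ u_{kj}`), then `ε(u_{ij}) = δ_{ij}` and `S(u_{ij}) = (u_{ji})*`. -/
theorem suq_corep_counit_antipode {A : Type*} [Ring A] [Algebra ℂ A] [StarRing A]
    [StarModule ℂ A]
    (q : ℂ) (hq0 : 0 < ‖q‖) (hq1 : ‖q‖ < 1)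
    (a g : A) (hrel : SUqRel q a g) (hbasis : SUqBasis a g)
    (μ : A ⊗[ℂ] A →ₗ[ℂ] A ⊗[ℂ] A →ₗ[ℂ] A ⊗[ℂ] A) (hμ : SUqBraidedMul q a g μ)
    (Δ : A →ₗ[ℂ] A ⊗[ℂ] A) (hΔ : SUqComul q a g μ Δ)
    (S : A →ₗ[ℂ] A) (hS : SUqAntipode q a g S)
    (ε : A →ₐ[ℂ] ℂ) (hεa : ε a = 1) (hεg : ε g = 0)
    (N : ℕ) (hN : 1 ≤ N) (u : Matrix (Fin N) (Fin N) A)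
    (hu1 : ∀ i j : Fin N, ∑ k : Fin N, u i k * star (u j k) = if i = j then 1 else 0)
    (hu2 : ∀ i j : Fin N, ∑ k : Fin N, star (u k i) * u k j = if i = j then 1 else 0)
    (hcorep : ∀ i j : Fin N, Δ (u i j) = ∑ k : Fin N, (u i k) ⊗ₜ[ℂ] (u k j)) :
    ∀ i j : Fin N,
      ε (u i j) = (if i = j then 1 else 0) ∧ S (u i j) = star (u j i) := by
  have hq : q ≠ 0 := by
    intro h; rw [h] at hq0; simp at hq0
  have hq1' : q ≠ 1 := by
    intro h1; rw [h1] at hq1; simp at hq1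
  have hεsg : ε (star g) = 0 := by
    have h := congrArg ε hrel.2.2.2.2
    simp only [map_mul, map_smul, hεa, hεg, smul_eq_mul, mul_one, one_mul] at h
    have h2 : (1 - q) * ε (star g) = 0 := by linear_combination h
    rcases mul_eq_zero.mp h2 with h3 | h3
    · exact absurd (sub_eq_zero.mp h3).symm hq1'
    · exact h3
  have hεsa : ε (star a) = 1 := by
    have h := congrArg ε hrel.1
    simpa [map_mul, hεa, hεg] using h
  have hone : (1 : A) ≠ 0 := by
    have h := hbasis.1.ne_zero (0, 0, 0)
    rwa [suqMono_zero] at h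
  have hsmul : ∀ c d : ℂ, c • (1 : A) = d • 1 → c = d := by
    intro c d h
    by_contra hne
    have h2 : (c - d) • (1 : A) = 0 := by rw [sub_smul, h, sub_self]
    have h3 : (1 : A) = 0 := by
      have h4 := congrArg (fun x => (c - d)⁻¹ • x) h2
      simpa [smul_smul, inv_mul_cancel₀ (sub_ne_zero.mpr hne)] using h4
    exact hone h3
  have hphi := phiDelta a g q ε μ Δ hrel hbasis hμ hΔ hεa hεg hεsa hεsg
  have hT := TDelta a g q S ε μ Δ hq hrel hbasis hμ hΔ hS hεa hεg hεsa hεsg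
  -- row reconstruction
  have h1 : ∀ i j : Fin N, u i j = ∑ k, ε (u k j) • u i k := by
    intro i j
    have h := hphi (u i j)
    rw [hcorep i j, map_sum] at h
    simp only [suqPhi_tmul] at h
    exact h.symm
  have hεu : ∀ i j : Fin N, ε (u i j) = if i = j then 1 else 0 := by
    intro l j
    apply hsmul
    calc ε (u l j) • (1 : A)
        = ∑ k, ε (u k j) • (if l = k then (1 : A) else 0) := by
          rw [Finset.sum_congr rfl (fun k _ => by rw [smul_ite, smul_zero])]
          rw [Finset.sum_ite_eq]
          simp
      _ = ∑ k, ε (u k j) • (∑ i0, star (u i0 l) * u i0 k) := by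
          refine Finset.sum_congr rfl fun k _ => ?_
          rw [hu2 l k]
      _ = ∑ k, ∑ i0, ε (u k j) • (star (u i0 l) * u i0 k) := by
          exact Finset.sum_congr rfl fun k _ => Finset.smul_sum
      _ = ∑ i0, ∑ k, ε (u k j) • (star (u i0 l) * u i0 k) := Finset.sum_comm
      _ = ∑ i0, star (u i0 l) * u i0 j := by
          refine Finset.sum_congr rfl fun i0 _ => ?_
          rw [h1 i0 j, Finset.mul_sum]
          exact Finset.sum_congr rfl fun k _ => (mul_smul_comm _ _ _).symm
      _ = if l = j then (1 : A) else 0 := hu2 l j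
      _ = (if l = j then (1 : ℂ) else 0) • (1 : A) := by split <;> simp
  have hSsum : ∀ i j : Fin N, ∑ k, S (u i k) * u k j = (if i = j then (1 : ℂ) else 0) • 1 := by
    intro i j
    have h := hT (u i j)
    rw [hcorep i j, map_sum] at h
    simp only [suqT_tmul] at h
    rw [hεu i j] at h
    exact h
  intro i j
  refine ⟨hεu i j, ?_⟩
  have e1 : S (u i j) = ∑ k, S (u i k) * (if k = j then (1 : A) else 0) := by
    simp [mul_ite]
  rw [e1]
  calc ∑ k, S (u i k) * (if k = j then (1 : A) else 0)
      = ∑ k, S (u i k) * (∑ l, u k l * star (u j l)) := by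
        refine Finset.sum_congr rfl fun k _ => ?_
        rw [hu1 k j]
    _ = ∑ k, ∑ l, S (u i k) * (u k l * star (u j l)) := by
        exact Finset.sum_congr rfl fun k _ => Finset.mul_sum _ _ _
    _ = ∑ l, ∑ k, (S (u i k) * u k l) * star (u j l) := by
        rw [Finset.sum_comm]
        exact Finset.sum_congr rfl fun l _ =>
          Finset.sum_congr rfl fun k _ => (mul_assoc _ _ _).symm
    _ = ∑ l, ((if i = l then (1 : ℂ) else 0) • (1 : A)) * star (u j l) := by
        refine Finset.sum_congr rfl fun l _ => ?_
        rw [← Finset.sum_mul, hSsum i l]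
    _ = star (u j i) := by
        simp [smul_mul_assoc, ite_smul]
end
end

section
/- The Haar functional is invariant under the antipode: h(S(a)) = h(a) for every a ∈ 𝒜. -/
open scoped TensorProduct

noncomputable section

lemma mem_homog_pos {A : Type*} [Ring A] [Algebra ℂ A] [StarRing A] (a g : A) (n m k : ℕ) :
    a ^ n * g ^ m * (star g) ^ k ∈ suqHomog a g ((m : ℤ) - k) := by
  apply Submodule.subset_span
  exact ⟨(n, m, k), rfl, by simp [suqMono]⟩

lemma mem_homog_neg {A : Type*} [Ring A] [Algebra ℂ A] [StarRing A] (a g : A) (n m k : ℕ) :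
    (star a) ^ n * g ^ m * (star g) ^ k ∈ suqHomog a g ((m : ℤ) - k) := by
  apply Submodule.subset_span
  refine ⟨(-(n : ℤ), m, k), rfl, ?_⟩
  rcases n with _ | n
  · simp [suqMono]
  · simp only [suqMono]
    rw [if_neg (by omega)]
    norm_num

lemma ex_comm_pow {A : Type*} [Ring A] [Algebra ℂ A] (y x : A)
    (hc : ∃ c : ℂ, y * x = c • (x * y)) (m : ℕ) :
    ∃ c : ℂ, y ^ m * x = c • (x * y ^ m) := by
  obtain ⟨c, hc⟩ := hc
  induction m with
  | zero => exact ⟨1, by simp⟩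
  | succ m ih =>
    obtain ⟨d, hd⟩ := ih
    refine ⟨c * d, ?_⟩
    rw [pow_succ, mul_assoc, hc, mul_smul_comm, ← mul_assoc, hd, smul_mul_assoc,
      smul_smul, mul_assoc, ← pow_succ]

lemma ex_comm_pow' {A : Type*} [Ring A] [Algebra ℂ A] (z x : A)
    (hc : ∃ c : ℂ, z * x = c • (x * z)) (n : ℕ) :
    ∃ c : ℂ, z * x ^ n = c • (x ^ n * z) := by
  obtain ⟨c, hc⟩ := hc
  induction n with
  | zero => exact ⟨1, by simp⟩
  | succ n ih =>
    obtain ⟨d, hd⟩ := ih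
    refine ⟨d * c, ?_⟩
    rw [pow_succ, ← mul_assoc, hd, smul_mul_assoc, mul_assoc, hc, mul_smul_comm,
      smul_smul, ← mul_assoc, ← pow_succ]

lemma ex_comm_mul {A : Type*} [Ring A] [Algebra ℂ A] (u v x : A)
    (hu : ∃ c : ℂ, u * x = c • (x * u)) (hv : ∃ c : ℂ, v * x = c • (x * v)) :
    ∃ c : ℂ, (u * v) * x = c • (x * (u * v)) := by
  obtain ⟨c, hc⟩ := hu
  obtain ⟨d, hd⟩ := hv
  refine ⟨d * c, ?_⟩
  rw [mul_assoc, hd, mul_smul_comm, ← mul_assoc, hc, smul_mul_assoc, smul_smul,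
    mul_assoc]

/-- The Haar functional is invariant under the antipode:
`h(S(a)) = h(a)` for all `a ∈ 𝒜`. -/
theorem suq_haar_antipode_invariant {A : Type*} [Ring A] [Algebra ℂ A] [StarRing A]
    [StarModule ℂ A]
    (q : ℂ) (hq0 : 0 < ‖q‖) (hq1 : ‖q‖ < 1)
    (a g : A) (hrel : SUqRel q a g) (hbasis : SUqBasis a g)
    (S : A →ₗ[ℂ] A) (hS : SUqAntipode q a g S)
    (h : A →ₗ[ℂ] ℂ) (hh : SUqHaar q a g h) :
    ∀ x : A, h (S x) = h x := by
  obtain ⟨hrel1, hrel2, hrel3, hrel4, hrel5⟩ := hrel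
  obtain ⟨hS1, hSa, hSas, hSg, hSgs, hShom, hSmul⟩ := hS
  have hq : q ≠ 0 := by
    intro hq; rw [hq] at hq0; simp at hq0
  have hqc : starRingEnd ℂ q ≠ 0 := by simpa using hq
  -- derived commutation relations
  have rga : g * a = (starRingEnd ℂ q)⁻¹ • (a * g) := by
    rw [hrel4, smul_smul, inv_mul_cancel₀ hqc, one_smul]
  have rsga : star g * a = q⁻¹ • (a * star g) := by
    rw [hrel5, smul_smul, inv_mul_cancel₀ hq, one_smul]
  have rgas : g * star a = (starRingEnd ℂ q) • (star a * g) := by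
    simpa [star_mul, star_star, star_smul, Complex.star_def] using congrArg star hrel5
  have rsgas : star g * star a = q • (star a * star g) := by
    simpa [star_mul, star_star, star_smul, Complex.star_def] using congrArg star hrel4
  have comm_a : ∀ m k n : ℕ, ∃ c : ℂ,
      (g ^ m * (star g) ^ k) * a ^ n = c • (a ^ n * (g ^ m * (star g) ^ k)) :=
    fun m k n => ex_comm_pow' _ _
      (ex_comm_mul _ _ _ (ex_comm_pow _ _ ⟨_, rga⟩ m) (ex_comm_pow _ _ ⟨_, rsga⟩ k)) n
  have comm_as : ∀ m k n : ℕ, ∃ c : ℂ,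
      (g ^ m * (star g) ^ k) * (star a) ^ n = c • ((star a) ^ n * (g ^ m * (star g) ^ k)) :=
    fun m k n => ex_comm_pow' _ _
      (ex_comm_mul _ _ _ (ex_comm_pow _ _ ⟨_, rgas⟩ m) (ex_comm_pow _ _ ⟨_, rsgas⟩ k)) n
  -- memberships
  have memA0 : ∀ n : ℕ, a ^ n ∈ suqHomog a g 0 := fun n => by
    simpa using mem_homog_pos a g n 0 0
  have memAs0 : ∀ n : ℕ, (star a) ^ n ∈ suqHomog a g 0 := fun n => by
    simpa using mem_homog_neg a g n 0 0
  have mema : a ∈ suqHomog a g 0 := by simpa using memA0 1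
  have memas : star a ∈ suqHomog a g 0 := by simpa using memAs0 1
  have memg : g ∈ suqHomog a g 1 := by simpa using mem_homog_pos a g 0 1 0
  have memsg : star g ∈ suqHomog a g (-1) := by simpa using mem_homog_pos a g 0 0 1
  have memgg : g * star g ∈ suqHomog a g 0 := by simpa using mem_homog_pos a g 0 1 1
  have memGG : ∀ m : ℕ, g ^ m * (star g) ^ m ∈ suqHomog a g 0 := fun m => by
    simpa using mem_homog_pos a g 0 m m
  -- h vanishes on nonzero degree
  have hvan : ∀ p : ℤ, p ≠ 0 → ∀ x ∈ suqHomog a g p, h x = 0 := by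
    intro p hp x hx
    have hle : suqHomog a g p ≤ LinearMap.ker h := by
      rw [suqHomog, Submodule.span_le]
      rintro y ⟨⟨n, m, k⟩, hmk, rfl⟩
      simp only [SetLike.mem_coe, LinearMap.mem_ker]
      rw [hh (n, m, k), if_neg]
      rintro ⟨-, h2⟩
      exact hp (by simp only at hmk h2; omega)
    exact LinearMap.mem_ker.mp (hle hx)
  -- S on powers of a, star a
  have sA : ∀ n : ℕ, S (a ^ n) = (star a) ^ n := by
    intro n
    induction n with
    | zero => simpa using hS1
    | succ n ih =>
      rw [pow_succ', hSmul 0 0 a mema (a ^ n) (memA0 n), ih, hSa, ← pow_succ]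
      norm_num
  have sAs : ∀ n : ℕ, S ((star a) ^ n) = a ^ n := by
    intro n
    induction n with
    | zero => simpa using hS1
    | succ n ih =>
      rw [pow_succ', hSmul 0 0 (star a) memas ((star a) ^ n) (memAs0 n), ih, hSas,
        ← pow_succ]
      norm_num
  have sgg : S (g * star g) = g * star g := by
    rw [hSmul 1 (-1) g memg (star g) memsg, hSgs, hSg, smul_mul_assoc, mul_smul_comm,
      smul_smul, smul_smul, ← hrel3]
    rw [show (-(1 * (-1 : ℤ))) = 1 from by norm_num, zpow_one]
    rw [show q / starRingEnd ℂ q * -q⁻¹ * -starRingEnd ℂ q = 1 from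
      by field_simp, one_smul]
  have sGG : ∀ m : ℕ, S (g ^ m * (star g) ^ m) = g ^ m * (star g) ^ m := by
    intro m
    induction m with
    | zero => simpa using hS1
    | succ m ih =>
      have cgg : Commute g (star g) := hrel3
      have e1 : g ^ (m+1) * (star g) ^ (m+1) = (g ^ m * (star g) ^ m) * (g * star g) := by
        rw [← cgg.mul_pow, ← cgg.mul_pow, pow_succ]
      have e2 : (g * star g) * (g ^ m * (star g) ^ m) = g ^ (m+1) * (star g) ^ (m+1) := by
        rw [← cgg.mul_pow, ← cgg.mul_pow, pow_succ']
      rw [e1, hSmul 0 0 _ (memGG m) _ memgg, sgg, ih, e2]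
      simpa using e1
  -- the key identity on basis monomials
  have key : ∀ i : ℤ × ℕ × ℕ, h (S (suqMono a g i)) = h (suqMono a g i) := by
    rintro ⟨n, m, k⟩
    by_cases hmk : m = k
    · subst hmk
      rcases lt_trichotomy n 0 with hn | hn | hn
      · -- n < 0 : monomial is (star a)^N * g^m * (star g)^m with N ≥ 1
        set N := (-n).toNat with hN
        have hmono : suqMono a g (n, m, m) = (star a) ^ N * (g ^ m * (star g) ^ m) := by
          simp only [suqMono]
          rw [if_neg (by omega), mul_assoc]
        have hs : S (suqMono a g (n, m, m)) = (g ^ m * (star g) ^ m) * a ^ N := by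
          rw [hmono, hSmul 0 0 _ (memAs0 N) _ (memGG m), sGG, sAs]
          norm_num
        obtain ⟨c, hc⟩ := comm_a m m N
        have h0 : h (a ^ N * (g ^ m * (star g) ^ m)) = 0 := by
          have e : a ^ N * (g ^ m * (star g) ^ m) = suqMono a g ((N : ℤ), m, m) := by
            simp only [suqMono]
            rw [if_pos (by omega), mul_assoc]
            norm_num
          rw [e, hh ((N : ℤ), m, m), if_neg]
          rintro ⟨h1, -⟩
          simp only at h1
          omega
        rw [hs, hc, map_smul, smul_eq_mul, h0, mul_zero, hh (n, m, m), if_neg]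
        rintro ⟨h1, -⟩
        simp only at h1
        omega
      · -- n = 0
        subst hn
        have hmono : suqMono a g (0, m, m) = g ^ m * (star g) ^ m := by
          simp [suqMono]
        rw [hmono, sGG]
      · -- n > 0
        set N := n.toNat with hN
        have hmono : suqMono a g (n, m, m) = a ^ N * (g ^ m * (star g) ^ m) := by
          simp only [suqMono]
          rw [if_pos (by omega), mul_assoc]
        have hs : S (suqMono a g (n, m, m)) = (g ^ m * (star g) ^ m) * (star a) ^ N := by
          rw [hmono, hSmul 0 0 _ (memA0 N) _ (memGG m), sGG, sA]
          norm_num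
        obtain ⟨c, hc⟩ := comm_as m m N
        have h0 : h ((star a) ^ N * (g ^ m * (star g) ^ m)) = 0 := by
          have e : (star a) ^ N * (g ^ m * (star g) ^ m) = suqMono a g (-(N : ℤ), m, m) := by
            simp only [suqMono]
            rw [if_neg (by omega), mul_assoc]
            norm_num
          rw [e, hh (-(N : ℤ), m, m), if_neg]
          rintro ⟨h1, -⟩
          simp only at h1
          omega
        rw [hs, hc, map_smul, smul_eq_mul, h0, mul_zero, hh (n, m, m), if_neg]
        rintro ⟨h1, -⟩
        simp only at h1
        omega
    · -- m ≠ k : both sides vanish by homogeneity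
      have hmem : suqMono a g (n, m, k) ∈ suqHomog a g ((m : ℤ) - k) :=
        Submodule.subset_span ⟨(n, m, k), rfl, rfl⟩
      have hp : ((m : ℤ) - k) ≠ 0 := by omega
      rw [hvan _ hp _ (hShom _ _ hmem), hvan _ hp _ hmem]
  intro x
  have hext : (h ∘ₗ S) = h :=
    LinearMap.ext_on hbasis.2 (by rintro y ⟨i, rfl⟩; exact key i)
  calc h (S x) = (h ∘ₗ S) x := rfl
    _ = h x := by rw [hext]
end
end

section
/- Let ζ ∈ ℂ with |ζ| = 1 and suppose ζ is not a root of unity (ζ^j ≠ 1 for every integer j ≥ 1). Then there exist a sequence (n_k)_{k≥1} of positive integers and a sequence (m_l)_{l≥1} of odd positive integers such that: for every fixed k, ζ^{n_k·m_l} → 1 as l → ∞, and for every fixed l, ζ^{n_k·m_l} → −1 as k → ∞. In particular the iterated limits lim_k lim_l ζ^{n_k m_l} = 1 and lim_l lim_k ζ^{n_k m_l} = −1 both exist and are different. -/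
open Complex Filter Real

private lemma abs_pow_sub_pow_le' (z w : ℂ) (hz : ‖z‖ ≤ 1) (hw : ‖w‖ ≤ 1)
    (n : ℕ) : ‖z ^ n - w ^ n‖ ≤ n * ‖z - w‖ := by
  induction n with
  | zero => simp
  | succ n ih =>
    have : z ^ (n + 1) - w ^ (n + 1) = z ^ n * (z - w) + (z ^ n - w ^ n) * w := by ring
    rw [this]
    calc ‖z ^ n * (z - w) + (z ^ n - w ^ n) * w‖
        ≤ ‖z ^ n * (z - w)‖ + ‖(z ^ n - w ^ n) * w‖ :=
          norm_add_le _ _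
      _ ≤ 1 * ‖z - w‖ + (n * ‖z - w‖) * 1 := by
          rw [norm_mul, norm_mul]
          gcongr
          · simpa using pow_le_one₀ (norm_nonneg z) hz
      _ = (n + 1 : ℕ) * ‖z - w‖ := by push_cast; ring

private lemma abs_exp_close (x y : ℝ) (h : |x - y| ≤ 1) :
    ‖Complex.exp (x * I) - Complex.exp (y * I)‖ ≤ 2 * |x - y| := by
  have key : Complex.exp (x * I) - Complex.exp (y * I)
      = Complex.exp (y * I) * (Complex.exp (((x - y) : ℝ) * I) - 1) := by
    rw [mul_sub, mul_one, ← Complex.exp_add]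
    push_cast
    ring_nf
  rw [key, norm_mul, Complex.norm_exp_ofReal_mul_I, one_mul]
  have h1 : ‖((x - y : ℝ) : ℂ) * I‖ = |x - y| := by
    rw [norm_mul, Complex.norm_I, mul_one, Complex.norm_real, Real.norm_eq_abs]
  have := Complex.norm_exp_sub_one_le (x := ((x - y : ℝ) : ℂ) * I) (by rw [h1]; exact h)
  rwa [h1] at this

private lemma abs_natAbs_sub (ζ : ℂ) (hζ : ‖ζ‖ = 1) (a : ℤ) (r : ℝ) :
    ‖ζ ^ a.natAbs - (r : ℂ)‖ = ‖ζ ^ a - (r : ℂ)‖ := by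
  rcases Int.natAbs_eq a with h | h
  · conv_rhs => rw [h, zpow_natCast]
  · have hw : ‖ζ ^ a.natAbs‖ = 1 := by rw [norm_pow, hζ, one_pow]
    conv_rhs => rw [h, zpow_neg, zpow_natCast, Complex.inv_eq_conj hw]
    rw [show ((r : ℂ)) = (starRingEnd ℂ) (r : ℂ) from (Complex.conj_ofReal r).symm, ← map_sub,
      Complex.norm_conj, Complex.conj_ofReal]

/-- Density of the subgroup generated by `θ` and `2π` when no nonzero integer multiple of `θ`
is an integer multiple of `2π`. -/
private lemma dense_aux (θ : ℝ) (h : ∀ q : ℤ, q ≠ 0 → ∀ p : ℤ, (q : ℝ) * θ ≠ 2 * π * p) :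
    Dense ((AddSubgroup.closure ({θ, 2 * π} : Set ℝ) : AddSubgroup ℝ) : Set ℝ) := by
  rcases AddSubgroup.dense_or_cyclic (AddSubgroup.closure ({θ, 2 * π} : Set ℝ)) with hd | ⟨a, ha⟩
  · exact hd
  · exfalso
    have hθ : θ ∈ AddSubgroup.closure ({θ, 2 * π} : Set ℝ) :=
      AddSubgroup.subset_closure (by simp)
    have h2π : 2 * π ∈ AddSubgroup.closure ({θ, 2 * π} : Set ℝ) :=
      AddSubgroup.subset_closure (by simp)
    rw [ha, AddSubgroup.mem_closure_singleton] at hθ h2π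
    obtain ⟨p, hp⟩ := hθ
    obtain ⟨q, hq⟩ := h2π
    have hq0 : q ≠ 0 := by
      rintro rfl
      simp only [zero_zsmul] at hq
      have := Real.pi_pos
      linarith
    refine h q hq0 p ?_
    rw [← hp, ← hq]
    push_cast [zsmul_eq_mul]
    ring

private lemma zpow_exp (ζ : ℂ) (θ : ℝ) (hexp : Complex.exp (θ * I) = ζ) (a : ℤ) :
    ζ ^ a = Complex.exp ((a * θ : ℝ) * I) := by
  rw [← hexp, ← Complex.exp_int_mul]
  push_cast
  ring_nf

private lemma approx_main (ζ : ℂ) (hζ : ‖ζ‖ = 1)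
    (hroot : ∀ j : ℕ, 1 ≤ j → ζ ^ j ≠ 1) :
    (∀ ε : ℝ, 0 < ε → ∃ n : ℕ, 0 < n ∧ ‖ζ ^ n + 1‖ < ε) ∧
    (∀ ε : ℝ, 0 < ε → ∃ m : ℕ, 0 < m ∧ Odd m ∧ ‖ζ ^ m - 1‖ < ε) := by
  set θ := Complex.arg ζ with hθ
  have hexp : Complex.exp (θ * I) = ζ := by
    have := Complex.norm_mul_exp_arg_mul_I ζ
    rwa [hζ, Complex.ofReal_one, one_mul] at this
  -- if q•θ is an integer multiple of 2π with q ≠ 0, then ζ is a root of unity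
  have hzpow_one : ∀ q : ℤ, q ≠ 0 → ∀ p : ℤ, (q : ℝ) * θ = 2 * π * p → False := by
    intro q hq0 p hqp
    have h1 : ζ ^ q = 1 := by
      rw [zpow_exp ζ θ hexp q, hqp]
      push_cast
      rw [show ((2 : ℂ) * π * p) * I = p * (2 * π * I) by ring]
      exact Complex.exp_int_mul_two_pi_mul_I p
    have h2 : ‖ζ ^ q.natAbs - (1 : ℝ)‖ = 0 := by
      rw [abs_natAbs_sub ζ hζ q 1, Complex.ofReal_one, h1, sub_self, norm_zero]
    rw [Complex.ofReal_one, norm_eq_zero, sub_eq_zero] at h2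
    exact hroot q.natAbs (by omega : 1 ≤ q.natAbs) h2
  have hpi := Real.pi_pos
  have hpi3 := Real.pi_gt_three
  constructor
  · -- powers near -1
    intro ε hε
    have hden : Dense ((AddSubgroup.closure ({θ, 2 * π} : Set ℝ) : AddSubgroup ℝ) : Set ℝ) :=
      dense_aux θ (fun q hq p h => hzpow_one q hq p h)
    set δ := min (ε / 2) (1 / 2) with hδdef
    have hδ : 0 < δ := lt_min (by linarith) (by norm_num)
    obtain ⟨x, hxS, hx⟩ := hden.exists_mem_open isOpen_Ioo
      (⟨π, by constructor <;> linarith⟩ : Set.Nonempty (Set.Ioo (π - δ) (π + δ)))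
    obtain ⟨a, b, hab⟩ := AddSubgroup.mem_closure_pair.mp hxS
    have hxπ : |x - π| < δ := by
      rw [abs_sub_lt_iff]; constructor <;> [linarith [hx.2]; linarith [hx.1]]
    have ha0 : a ≠ 0 := by
      rintro rfl
      simp only [zero_zsmul, zero_add, zsmul_eq_mul] at hab
      have hxb : (b : ℝ) * (2 * π) = x := by simpa using hab
      have hb : (2 * b - 1 : ℤ) ≠ 0 := by omega
      have hb1 : (1 : ℝ) ≤ |(2 * (b : ℝ) - 1)| := by
        have := Int.one_le_abs (by omega : (2 * b - 1 : ℤ) ≠ 0)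
        calc (1:ℝ) ≤ |((2 * b - 1 : ℤ) : ℝ)| := by exact_mod_cast this
          _ = |(2 * (b : ℝ) - 1)| := by push_cast; ring_nf
      have : |x - π| = π * |2 * (b : ℝ) - 1| := by
        rw [← hxb, show (b : ℝ) * (2 * π) - π = π * (2 * (b : ℝ) - 1) by ring, abs_mul,
          abs_of_pos hpi]
      have hδle : δ ≤ 1 / 2 := min_le_right _ _
      nlinarith
    -- ζ ^ a = exp(x * I)
    have hx_eq : ζ ^ a = Complex.exp ((x : ℝ) * I) := by
      rw [zpow_exp ζ θ hexp a, ← hab]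
      push_cast [zsmul_eq_mul]
      rw [show ((a : ℂ) * θ + b * (2 * π)) * I = a * θ * I + b * (2 * π * I) by ring,
        Complex.exp_add, Complex.exp_int_mul_two_pi_mul_I, mul_one]
    have hclose : ‖ζ ^ a - (-1 : ℝ)‖ < ε := by
      rw [hx_eq]
      have h1 : |x - π| ≤ 1 := le_trans hxπ.le (by
        have : δ ≤ 1 / 2 := min_le_right _ _; linarith)
      calc ‖Complex.exp ((x : ℝ) * I) - ((-1 : ℝ) : ℂ)‖
          = ‖Complex.exp ((x : ℝ) * I) - Complex.exp ((π : ℝ) * I)‖ := by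
            rw [Complex.exp_pi_mul_I]; norm_num
        _ ≤ 2 * |x - π| := abs_exp_close x π h1
        _ < ε := by
            have : δ ≤ ε / 2 := min_le_left _ _
            linarith
    refine ⟨a.natAbs, Int.natAbs_pos.mpr ha0, ?_⟩
    have heq : ζ ^ a.natAbs + 1 = ζ ^ a.natAbs - ((-1 : ℝ) : ℂ) := by push_cast; ring
    rw [heq, abs_natAbs_sub ζ hζ a (-1)]
    exact hclose
  · -- odd powers near 1
    intro ε hε
    have hden : Dense ((AddSubgroup.closure ({2 * θ, 2 * π} : Set ℝ) : AddSubgroup ℝ) : Set ℝ) := by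
      refine dense_aux (2 * θ) (fun q hq p h => ?_)
      exact hzpow_one (2 * q) (by omega) p (by push_cast; linarith)
    set δ := min (ε / 2) (1 / 2) with hδdef
    have hδ : 0 < δ := lt_min (by linarith) (by norm_num)
    obtain ⟨x, hxS, hx⟩ := hden.exists_mem_open isOpen_Ioo
      (⟨-θ, by constructor <;> linarith⟩ : Set.Nonempty (Set.Ioo (-θ - δ) (-θ + δ)))
    obtain ⟨a, b, hab⟩ := AddSubgroup.mem_closure_pair.mp hxS
    have hxθ : |x + θ| < δ := by
      rw [abs_lt]; constructor <;> [linarith [hx.1]; linarith [hx.2]]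
    set c : ℤ := 2 * a + 1 with hc
    have hc_eq : ζ ^ c = Complex.exp (((x + θ) : ℝ) * I) := by
      rw [zpow_exp ζ θ hexp c, ← hab]
      push_cast [zsmul_eq_mul, hc]
      rw [show ((a:ℂ) * (2 * θ) + b * (2 * π) + θ) * I
          = (2 * a + 1) * θ * I + b * (2 * π * I) by ring,
        Complex.exp_add, Complex.exp_int_mul_two_pi_mul_I, mul_one]
    have hclose : ‖ζ ^ c - (1 : ℝ)‖ < ε := by
      rw [hc_eq]
      have h1 : |x + θ - 0| ≤ 1 := by
        rw [sub_zero]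
        exact le_trans hxθ.le (by have : δ ≤ 1 / 2 := min_le_right _ _; linarith)
      calc ‖Complex.exp (((x + θ) : ℝ) * I) - ((1 : ℝ) : ℂ)‖
          = ‖Complex.exp (((x + θ) : ℝ) * I) - Complex.exp ((0 : ℝ) * I)‖ := by
            norm_num
        _ ≤ 2 * |x + θ - 0| := abs_exp_close (x + θ) 0 h1
        _ < ε := by
            rw [sub_zero]
            have : δ ≤ ε / 2 := min_le_left _ _
            linarith
    refine ⟨c.natAbs, Int.natAbs_pos.mpr (by omega), Int.natAbs_odd.mpr ⟨a, by ring⟩, ?_⟩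
    have h2 := abs_natAbs_sub ζ hζ c 1
    rw [Complex.ofReal_one] at h2 hclose
    rw [h2]
    exact hclose

/-- If `ζ ∈ ℂ` has modulus `1` and is not a root of unity, then there are a
sequence of positive integers `n_k` and a sequence of odd positive integers `m_l` such that
`ζ^{n_k m_l} → 1` as `l → ∞` (for each fixed `k`) and `ζ^{n_k m_l} → -1` as `k → ∞` (for each
fixed `l`); in particular the two iterated limits exist and are different. -/
theorem zeta_iterated_limits (ζ : ℂ) (hζ : ‖ζ‖ = 1)
    (hroot : ∀ j : ℕ, 1 ≤ j → ζ ^ j ≠ 1) :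
    ∃ (n m : ℕ → ℕ),
      (∀ k, 0 < n k) ∧ (∀ l, 0 < m l ∧ Odd (m l)) ∧
      (∀ k, Filter.Tendsto (fun l => ζ ^ (n k * m l)) Filter.atTop (nhds 1)) ∧
      (∀ l, Filter.Tendsto (fun k => ζ ^ (n k * m l)) Filter.atTop (nhds (-1))) := by
  obtain ⟨hA, hB⟩ := approx_main ζ hζ hroot
  have hm : ∀ l : ℕ, ∃ m : ℕ, 0 < m ∧ Odd m ∧ ‖ζ ^ m - 1‖ < 1 / ((l : ℝ) + 1) :=
    fun l => hB _ (by positivity)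
  choose m hm1 hm2 hm3 using hm
  set S : ℕ → ℕ := fun k => ∑ l ∈ Finset.range (k + 1), m l with hS
  have hn : ∀ k : ℕ, ∃ n : ℕ, 0 < n ∧
      ‖ζ ^ n + 1‖ < 1 / (((k : ℝ) + 1) * ((S k : ℝ) + 1)) :=
    fun k => hA _ (by positivity)
  choose n hn1 hn2 using hn
  have habs_pow : ∀ j : ℕ, ‖ζ ^ j‖ = 1 := fun j => by rw [norm_pow, hζ, one_pow]
  refine ⟨n, m, hn1, fun l => ⟨hm1 l, hm2 l⟩, ?_, ?_⟩
  · intro k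
    rw [tendsto_iff_norm_sub_tendsto_zero]
    have hb : Filter.Tendsto (fun l : ℕ => (n k : ℝ) * (1 / ((l : ℝ) + 1)))
        Filter.atTop (nhds 0) := by
      have := tendsto_one_div_add_atTop_nhds_zero_nat.const_mul (n k : ℝ)
      rwa [mul_zero] at this
    refine squeeze_zero (fun l => norm_nonneg _) (fun l => ?_) hb
    have : ζ ^ (n k * m l) = (ζ ^ m l) ^ n k := by rw [← pow_mul, mul_comm]
    rw [this]
    calc ‖(ζ ^ m l) ^ n k - 1‖
        = ‖(ζ ^ m l) ^ n k - 1 ^ n k‖ := by rw [one_pow]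
      _ ≤ (n k : ℝ) * ‖ζ ^ m l - 1‖ :=
          abs_pow_sub_pow_le' _ _ (le_of_eq (habs_pow _)) (by simp) _
      _ ≤ (n k : ℝ) * (1 / ((l : ℝ) + 1)) := by
          have := (hm3 l).le
          gcongr
  · intro l
    rw [tendsto_iff_norm_sub_tendsto_zero]
    refine squeeze_zero' (Filter.Eventually.of_forall fun k => norm_nonneg _)
      ?_ tendsto_one_div_add_atTop_nhds_zero_nat
    filter_upwards [Filter.eventually_ge_atTop l] with k hkl
    have hml_le : m l ≤ S k + 1 := by
      have : m l ≤ S k :=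
        Finset.single_le_sum (f := m) (fun i _ => Nat.zero_le _)
          (Finset.mem_range.mpr (by omega))
      omega
    have hpow : ζ ^ (n k * m l) = (ζ ^ n k) ^ m l := by rw [← pow_mul]
    have hneg : ((-1 : ℂ)) ^ m l = (-1 : ℂ) := (hm2 l).neg_one_pow
    have hkpos : (0:ℝ) < (k : ℝ) + 1 := by positivity
    have hSpos : (0:ℝ) < (S k : ℝ) + 1 := by positivity
    calc ‖ζ ^ (n k * m l) - (-1)‖
        = ‖(ζ ^ n k) ^ m l - (-1 : ℂ) ^ m l‖ := by
          rw [hpow, hneg]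
      _ ≤ (m l : ℝ) * ‖ζ ^ n k - (-1)‖ :=
          abs_pow_sub_pow_le' _ _ (habs_pow _).le (by simp) _
      _ = (m l : ℝ) * ‖ζ ^ n k + 1‖ := by rw [sub_neg_eq_add]
      _ ≤ (m l : ℝ) * (1 / (((k : ℝ) + 1) * ((S k : ℝ) + 1))) := by
          have := (hn2 k).le
          gcongr
      _ ≤ 1 / ((k : ℝ) + 1) := by
          rw [mul_one_div, div_le_div_iff₀ (by positivity) hkpos]
          have hc : (m l : ℝ) ≤ (S k : ℝ) + 1 := by exact_mod_cast hml_le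
          nlinarith
end
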